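/- arXiv:1201.6425 — 3 statements merged into one kernel-verified Lean document; each statement's English description precedes it below -/
import Mathlib

section
/- Let $P_1$ and $P_2$ be probability distributions on a finite set $\mathcal{Y}$ with $|\mathcal{Y}| \ge 2$ and $P_1 \ne P_2$, and for $\alpha \in [0,1]$ let $Q_\alpha(y) = \alpha P_1(y) + (1-\alpha) P_2(y)$ and $I(\alpha) = \sum_{y \in \mathcal{Y}} \big[ \alpha P_1(y) \log\frac{P_1(y)}{Q_\alpha(y)} + (1-\alpha) P_2(y) \log\frac{P_2(y)}{Q_\alpha(y)} \big]$. If $\alpha^* \in [0,1]$ satisfies $I(\alpha^*) = \max_{\alpha \in [0,1]} I(\alpha)$, then $\frac{1}{e} < \alpha^* < 1 - \frac{1}{e}$. -/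
open BigOperators Real



lemma MR_two_lt_e : (2:ℝ) < Real.exp 1 := by
  have := Real.exp_one_gt_d9
  norm_num at this ⊢
  linarith

lemma MR_gibbs_strict {a q : ℝ} (ha : 0 ≤ a) (hq : 0 < q) (hne : a ≠ q) :
    a - q < a * Real.log (a / q) := by
  rcases eq_or_lt_of_le ha with h | h
  · simp [← h]
    linarith
  · have hx : Real.log (q / a) < q / a - 1 :=
      Real.log_lt_sub_one_of_pos (by positivity) (by
        intro hqa
        exact hne (by field_simp at hqa; linarith))
    have hlog : Real.log (q / a) = - Real.log (a / q) := by
      rw [← Real.log_inv]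
      congr 1
      field_simp
    rw [hlog] at hx
    have h2 : 1 - q / a < Real.log (a / q) := by linarith
    have := mul_lt_mul_of_pos_left h2 h
    calc a - q = a * (1 - q/a) := by field_simp
    _ < a * Real.log (a / q) := this

lemma MR_gibbs {a q : ℝ} (ha : 0 ≤ a) (hq : 0 < q) :
    a - q ≤ a * Real.log (a / q) := by
  rcases eq_or_ne a q with rfl | hne
  · rcases eq_or_lt_of_le ha with h | h
    · simp [← h]
    · rw [div_self h.ne', Real.log_one, mul_zero]
      simp
  · exact (MR_gibbs_strict ha hq hne).le

noncomputable def MRc : ℝ := Real.exp 1 - 1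

lemma MRc_gt_one : 1 < MRc := by
  have : (2:ℝ) < Real.exp 1 := by
    have := Real.exp_one_gt_d9; norm_num at this ⊢; linarith
  unfold MRc; linarith

lemma MRc_pos : 0 < MRc := lt_trans one_pos MRc_gt_one

noncomputable def MRg (t : ℝ) : ℝ := t * Real.log t + (1 - t) * Real.log (t + MRc)

noncomputable def MRg' (t : ℝ) : ℝ :=
  (Real.log t + 1) + ((-1) * Real.log (t + MRc) + (1 - t) * (1 / (t + MRc)))

lemma MRg_hasDeriv {t : ℝ} (ht : 0 < t) : HasDerivAt MRg (MRg' t) t := by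
  have htc : t + MRc ≠ 0 := by have := MRc_pos; positivity
  have h1 : HasDerivAt (fun t : ℝ => t * Real.log t) (Real.log t + 1) t :=
    Real.hasDerivAt_mul_log ht.ne'
  have hlog : HasDerivAt (fun t : ℝ => Real.log (t + MRc)) (1 / (t + MRc)) t := by
    have := ((hasDerivAt_id t).add_const MRc).log htc
    simpa using this
  have h2 : HasDerivAt (fun t : ℝ => (1 - t) * Real.log (t + MRc))
      ((-1) * Real.log (t + MRc) + (1 - t) * (1 / (t + MRc))) t := by
    have hlin : HasDerivAt (fun t : ℝ => 1 - t) (-1) t := by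
      exact (hasDerivAt_id t).const_sub 1
    exact hlin.mul hlog
  exact h1.add h2

noncomputable def MRg'' (t : ℝ) : ℝ :=
  1 / t + ((-1) * (1 / (t + MRc)) +
    (((-1) * (t + MRc) - (1 - t) * 1) / (t + MRc) ^ 2))

lemma MRg'_hasDeriv {t : ℝ} (ht : 0 < t) : HasDerivAt MRg' (MRg'' t) t := by
  have htc : t + MRc ≠ 0 := by have := MRc_pos; positivity
  have hlog : HasDerivAt (fun t : ℝ => Real.log (t + MRc)) (1 / (t + MRc)) t := by
    simpa using ((hasDerivAt_id t).add_const MRc).log htc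
  have h1 : HasDerivAt (fun t : ℝ => Real.log t + 1) (1 / t) t := by
    simpa using (Real.hasDerivAt_log ht.ne').add_const 1
  have hlin : HasDerivAt (fun t : ℝ => 1 - t) (-1) t := by
    exact (hasDerivAt_id t).const_sub 1
  have hconst : HasDerivAt (fun t : ℝ => t + MRc) 1 t := (hasDerivAt_id t).add_const MRc
  have hdiv : HasDerivAt (fun t : ℝ => (1 - t) / (t + MRc))
      (((-1) * (t + MRc) - (1 - t) * 1) / (t + MRc) ^ 2) t := hlin.div hconst htc
  have h2 : HasDerivAt (fun t : ℝ => (-1) * Real.log (t + MRc) + (1 - t) * (1 / (t + MRc)))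
      ((-1) * (1 / (t + MRc)) + (((-1) * (t + MRc) - (1 - t) * 1) / (t + MRc) ^ 2)) t := by
    have := (hlog.const_mul (-1 : ℝ)).add (by simpa [div_eq_mul_inv, mul_comm] using hdiv : HasDerivAt (fun t : ℝ => (1 - t) * (1 / (t + MRc))) (((-1) * (t + MRc) - (1 - t) * 1) / (t + MRc) ^ 2) t)
    exact this
  exact h1.add h2

lemma MRg''_pos {t : ℝ} (ht : 0 < t) (ht1 : t < 1) : 0 < MRg'' t := by
  have hc := MRc_gt_one
  have htc : (0:ℝ) < t + MRc := by linarith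
  have key : 0 < (t + MRc) ^ 2 - t * (t + MRc) - (MRc + 1) * t := by nlinarith
  have heq : MRg'' t = ((t + MRc)^2 - t*(t+MRc) - (MRc+1)*t) / (t * (t + MRc)^2) := by
    unfold MRg''; field_simp; ring
  rw [heq]
  positivity

lemma MRg'_one : MRg' 1 = 0 := by
  unfold MRg'
  have : (1:ℝ) + MRc = Real.exp 1 := by unfold MRc; ring
  rw [this]
  simp [Real.log_exp]

lemma MRg'_neg {t : ℝ} (ht : 0 < t) (ht1 : t < 1) : MRg' t < 0 := by
  have hmono : StrictMonoOn MRg' (Set.Ioc (0:ℝ) 1) := by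
    apply strictMonoOn_of_deriv_pos (convex_Ioc 0 1)
    · intro x hx
      exact (MRg'_hasDeriv hx.1).continuousAt.continuousWithinAt
    · intro x hx
      rw [interior_Ioc] at hx
      rw [(MRg'_hasDeriv hx.1).deriv]
      exact MRg''_pos hx.1 hx.2
  have := hmono ⟨ht, ht1.le⟩ ⟨one_pos, le_refl 1⟩ ht1
  rw [MRg'_one] at this
  exact this

lemma MRg_one : MRg 1 = 0 := by
  unfold MRg
  norm_num

lemma MRg_continuousOn : ContinuousOn MRg (Set.Icc (0:ℝ) 1) := by
  apply ContinuousOn.add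
  · exact Real.continuous_mul_log.continuousOn
  · apply ContinuousOn.mul
    · exact (continuous_const.sub continuous_id).continuousOn
    · apply ContinuousOn.log
      · exact (continuous_id.add continuous_const).continuousOn
      · intro x hx
        have := MRc_pos
        have := hx.1
        positivity

lemma MRg_pos {t : ℝ} (ht : 0 ≤ t) (ht1 : t < 1) : 0 < MRg t := by
  have hanti : StrictAntiOn MRg (Set.Icc (0:ℝ) 1) := by
    apply strictAntiOn_of_deriv_neg (convex_Icc 0 1) MRg_continuousOn
    intro x hx
    rw [interior_Icc] at hx
    rw [(MRg_hasDeriv hx.1).deriv]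
    exact MRg'_neg hx.1 hx.2
  have := hanti ⟨ht, ht1.le⟩ ⟨zero_le_one, le_refl 1⟩ ht1
  rw [MRg_one] at this
  exact this

noncomputable def MRp (s : ℝ) : ℝ := -(s * Real.log s) - (1 - s) * Real.log (1 + MRc * s)

noncomputable def MRp' (s : ℝ) : ℝ :=
  -(Real.log s + 1) - ((-1) * Real.log (1 + MRc * s) + (1 - s) * (MRc / (1 + MRc * s)))

noncomputable def MRp'' (s : ℝ) : ℝ :=
  -(1 / s) - ((-1) * (MRc / (1 + MRc * s)) +
    (((-MRc) * (1 + MRc * s) - (1 - s) * MRc * MRc) / (1 + MRc * s) ^ 2))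

lemma MRp_arg_pos {s : ℝ} (hs : 0 ≤ s) : (0:ℝ) < 1 + MRc * s := by
  have := MRc_pos; nlinarith

lemma MRlog_hasDeriv {s : ℝ} (hs : 0 ≤ s) :
    HasDerivAt (fun s : ℝ => Real.log (1 + MRc * s)) (MRc / (1 + MRc * s)) s := by
  have h : HasDerivAt (fun s : ℝ => 1 + MRc * s) MRc s := by
    simpa using ((hasDerivAt_id s).const_mul MRc).const_add 1
  have := h.log (MRp_arg_pos hs).ne'
  simpa [div_eq_mul_inv] using this

lemma MRp_hasDeriv {s : ℝ} (hs : 0 < s) : HasDerivAt MRp (MRp' s) s := by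
  have h1 : HasDerivAt (fun s : ℝ => s * Real.log s) (Real.log s + 1) s :=
    Real.hasDerivAt_mul_log hs.ne'
  have hlin : HasDerivAt (fun s : ℝ => 1 - s) (-1) s := by
    exact (hasDerivAt_id s).const_sub 1
  have h2 : HasDerivAt (fun s : ℝ => (1 - s) * Real.log (1 + MRc * s))
      ((-1) * Real.log (1 + MRc * s) + (1 - s) * (MRc / (1 + MRc * s))) s :=
    hlin.mul (MRlog_hasDeriv hs.le)
  exact h1.neg.sub h2

lemma MRp'_hasDeriv {s : ℝ} (hs : 0 < s) : HasDerivAt MRp' (MRp'' s) s := by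
  have harg := MRp_arg_pos hs.le
  have h1 : HasDerivAt (fun s : ℝ => Real.log s + 1) (1 / s) s := by
    simpa using (Real.hasDerivAt_log hs.ne').add_const 1
  have hlin : HasDerivAt (fun s : ℝ => 1 - s) (-1) s := by
    exact (hasDerivAt_id s).const_sub 1
  have hden : HasDerivAt (fun s : ℝ => 1 + MRc * s) MRc s := by
    simpa using ((hasDerivAt_id s).const_mul MRc).const_add 1
  have hnum : HasDerivAt (fun s : ℝ => (1 - s) * MRc) (-MRc) s := by
    simpa using hlin.mul_const MRc
  have hdiv : HasDerivAt (fun s : ℝ => ((1 - s) * MRc) / (1 + MRc * s))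
      (((-MRc) * (1 + MRc * s) - (1 - s) * MRc * MRc) / (1 + MRc * s) ^ 2) s :=
    hnum.div hden harg.ne'
  have hdiv' : HasDerivAt (fun s : ℝ => (1 - s) * (MRc / (1 + MRc * s)))
      (((-MRc) * (1 + MRc * s) - (1 - s) * MRc * MRc) / (1 + MRc * s) ^ 2) s := by
    have : (fun s : ℝ => (1 - s) * (MRc / (1 + MRc * s)))
        = fun s : ℝ => ((1 - s) * MRc) / (1 + MRc * s) := by
      funext x; ring
    rw [this]; exact hdiv
  have h2 := ((MRlog_hasDeriv hs.le).const_mul (-1 : ℝ)).add hdiv'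
  have h2' : HasDerivAt (fun s : ℝ => (-1) * Real.log (1 + MRc * s) + (1 - s) * (MRc / (1 + MRc * s)))
      ((-1) * (MRc / (1 + MRc * s)) + (((-MRc) * (1 + MRc * s) - (1 - s) * MRc * MRc) / (1 + MRc * s) ^ 2)) s := by
    exact h2
  exact h1.neg.sub h2'

noncomputable def MRs0 : ℝ := 1 / MRc ^ 2

lemma MRs0_pos : 0 < MRs0 := by have := MRc_pos; unfold MRs0; positivity
lemma MRs0_lt_one : MRs0 < 1 := by
  have h := MRc_gt_one
  unfold MRs0
  rw [div_lt_one (by nlinarith)]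
  nlinarith

lemma MRp''_eq {s : ℝ} (hs : 0 < s) :
    MRp'' s = (MRc ^ 2 * s - 1) / (s * (1 + MRc * s) ^ 2) := by
  have harg := MRp_arg_pos hs.le
  unfold MRp''
  generalize hu : 1 + MRc * s = u at *
  have hs' := hs.ne'
  have harg' := harg.ne'
  field_simp
  rw [← hu]
  ring

lemma MRp'_one : MRp' 1 = 0 := by
  unfold MRp'
  have h : (1:ℝ) + MRc * 1 = Real.exp 1 := by unfold MRc; ring
  rw [h]
  simp [Real.log_exp]

lemma MRp'_neg {s : ℝ} (hs : MRs0 ≤ s) (hs1 : s < 1) : MRp' s < 0 := by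
  have hmono : StrictMonoOn MRp' (Set.Icc MRs0 1) := by
    apply strictMonoOn_of_deriv_pos (convex_Icc _ _)
    · intro x hx
      have hx0 : 0 < x := lt_of_lt_of_le MRs0_pos hx.1
      exact (MRp'_hasDeriv hx0).continuousAt.continuousWithinAt
    · intro x hx
      rw [interior_Icc] at hx
      have hx0 : 0 < x := lt_trans MRs0_pos hx.1
      rw [(MRp'_hasDeriv hx0).deriv, MRp''_eq hx0]
      have harg := MRp_arg_pos hx0.le
      apply div_pos
      · have hc := MRc_pos
        have hc' : MRc ≠ 0 := hc.ne'
        have h1 : MRc ^ 2 * MRs0 = 1 := by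
          unfold MRs0; field_simp
        nlinarith [mul_pos (show (0:ℝ) < MRc^2 by positivity) (sub_pos.mpr hx.1)]
      · positivity
  have := hmono ⟨hs, hs1.le⟩ ⟨MRs0_lt_one.le.trans (le_refl 1), le_refl 1⟩ hs1
  rw [MRp'_one] at this
  exact this

lemma MRp_one : MRp 1 = 0 := by unfold MRp; norm_num

lemma MRp_zero : MRp 0 = 0 := by unfold MRp; norm_num

lemma MRp_continuousOn : ContinuousOn MRp (Set.Icc (0:ℝ) 1) := by
  apply ContinuousOn.sub
  · exact Real.continuous_mul_log.continuousOn.neg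
  · apply ContinuousOn.mul
    · exact (continuous_const.sub continuous_id).continuousOn
    · apply ContinuousOn.log
      · exact (continuous_const.add (continuous_const.mul continuous_id)).continuousOn
      · intro x hx
        exact (MRp_arg_pos hx.1).ne'

lemma MRp_nonneg_right {s : ℝ} (hs : MRs0 ≤ s) (hs1 : s ≤ 1) : 0 ≤ MRp s := by
  have hanti : StrictAntiOn MRp (Set.Icc MRs0 1) := by
    apply strictAntiOn_of_deriv_neg (convex_Icc _ _)
    · exact MRp_continuousOn.mono (Set.Icc_subset_Icc MRs0_pos.le (le_refl 1))
    · intro x hx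
      rw [interior_Icc] at hx
      have hx0 : 0 < x := lt_trans MRs0_pos hx.1
      rw [(MRp_hasDeriv hx0).deriv]
      exact MRp'_neg hx.1.le hx.2
  rcases eq_or_lt_of_le hs1 with rfl | hlt
  · rw [MRp_one]
  · have := hanti ⟨hs, hs1⟩ ⟨MRs0_lt_one.le.trans (le_refl 1), le_refl 1⟩ hlt
    rw [MRp_one] at this
    exact this.le

lemma MRp_concaveOn : ConcaveOn ℝ (Set.Icc (0:ℝ) MRs0) MRp := by
  apply concaveOn_of_hasDerivWithinAt2_nonpos (f' := MRp') (f'' := MRp'')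
    (convex_Icc _ _)
    (MRp_continuousOn.mono (Set.Icc_subset_Icc (le_refl 0) MRs0_lt_one.le))
  · intro x hx
    rw [interior_Icc] at hx
    exact (MRp_hasDeriv hx.1).hasDerivWithinAt
  · intro x hx
    rw [interior_Icc] at hx
    exact (MRp'_hasDeriv hx.1).hasDerivWithinAt
  · intro x hx
    rw [interior_Icc] at hx
    rw [MRp''_eq hx.1]
    apply div_nonpos_of_nonpos_of_nonneg
    · have hc := MRc_pos
      have hc' : MRc ≠ 0 := hc.ne'
      have h1 : MRc ^ 2 * MRs0 = 1 := by unfold MRs0; field_simp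
      nlinarith [mul_nonneg (show (0:ℝ) ≤ MRc^2 by positivity) (sub_nonneg.mpr hx.2.le)]
    · exact (mul_pos hx.1 (pow_pos (MRp_arg_pos hx.1.le) 2)).le

lemma MRp_nonneg {s : ℝ} (hs : 0 ≤ s) (hs1 : s ≤ 1) : 0 ≤ MRp s := by
  rcases le_or_gt MRs0 s with h | h
  · exact MRp_nonneg_right h hs1
  · -- s ∈ [0, MRs0): use concavity between 0 and MRs0
    have hs0 := MRs0_pos
    set θ : ℝ := s / MRs0 with hθ
    have hθ0 : 0 ≤ θ := by positivity
    have hθ1 : θ ≤ 1 := by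
      rw [hθ, div_le_one hs0]; exact h.le
    have hcomb := MRp_concaveOn.2
      (show (0:ℝ) ∈ Set.Icc (0:ℝ) MRs0 from ⟨le_refl 0, hs0.le⟩)
      (show MRs0 ∈ Set.Icc (0:ℝ) MRs0 from ⟨hs0.le, le_refl MRs0⟩)
      (show (0:ℝ) ≤ 1 - θ by linarith) hθ0 (by ring)
    have hxy : (1 - θ) • (0:ℝ) + θ • MRs0 = s := by
      have := hs0.ne'
      simp only [smul_eq_mul, mul_zero, zero_add, hθ]
      field_simp
    rw [hxy] at hcomb
    have hMRp0 : 0 ≤ (1 - θ) • MRp 0 + θ • MRp MRs0 := by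
      rw [MRp_zero]
      simp [smul_eq_mul]
      have := MRp_nonneg_right (le_refl MRs0) MRs0_lt_one.le
      positivity
    linarith


lemma MRg_pos_expand {t : ℝ} (ht : 0 ≤ t) (ht1 : t < 1) :
    0 < t * Real.log t + (1 - t) * Real.log (t + MRc) := MRg_pos ht ht1

lemma MRp_nonneg_expand {s : ℝ} (hs : 0 ≤ s) (hs1 : s ≤ 1) :
    0 ≤ -(s * Real.log s) - (1 - s) * Real.log (1 + MRc * s) := MRp_nonneg hs hs1


lemma MR_two_lt_e' : (2:ℝ) < Real.exp 1 := by have := MRc_gt_one; unfold MRc at this; linarith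

/-- strict pointwise inequality when `a < b` -/
lemma MR_key_strict {α a b : ℝ} (hα : 0 < α) (hα2 : α ≤ (Real.exp 1)⁻¹)
    (ha : 0 ≤ a) (hab : a < b) :
    0 < a * Real.log (a / (α * a + (1 - α) * b))
      - b * Real.log (b / (α * a + (1 - α) * b)) - (a - b) := by
  have hE : (2:ℝ) < Real.exp 1 := MR_two_lt_e'
  have hEpos : (0:ℝ) < Real.exp 1 := by linarith
  have hαE : α * Real.exp 1 ≤ 1 := by
    have := mul_le_mul_of_nonneg_right hα2 hEpos.le
    rwa [inv_mul_cancel₀ hEpos.ne'] at this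
  have hα1 : α < 1 := by nlinarith
  have h1α : (0:ℝ) < 1 - α := by linarith
  set Q : ℝ := α * a + (1 - α) * b with hQdef
  have hbpos : 0 < b := lt_of_le_of_lt ha hab
  have hQpos : 0 < Q := by
    have h1 : 0 < (1 - α) * b := mul_pos h1α hbpos
    have h2 : 0 ≤ α * a := by positivity
    rw [hQdef]; linarith
  rcases eq_or_lt_of_le ha with h0 | hapos
  · -- a = 0
    rw [← h0]
    have hQ0 : Q = (1 - α) * b := by rw [hQdef, ← h0]; ring
    have hbq : b / Q = (1 - α)⁻¹ := by
      rw [hQ0, mul_comm]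
      exact div_mul_cancel_left₀ hbpos.ne' _
    rw [hbq, Real.log_inv]
    have hlog : -1 < Real.log (1 - α) := by
      rw [show (-1 : ℝ) = Real.log (Real.exp 1)⁻¹ by
        rw [← Real.exp_neg (1:ℝ), Real.log_exp]]
      apply Real.log_lt_log (by positivity)
      have h9 : (Real.exp 1)⁻¹ + (Real.exp 1)⁻¹ < 1 := by
        have : (Real.exp 1)⁻¹ < 0.5 := by
          rw [show (0.5:ℝ) = ((2:ℝ))⁻¹ by norm_num]
          exact inv_strictAnti₀ (by norm_num) hE
        linarith
      linarith
    nlinarith [hlog, hbpos]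
  · -- 0 < a < b : use MRg
    have hb' : b ≠ 0 := hbpos.ne'
    have ht0 : 0 < a / b := by positivity
    have ht1 : a / b < 1 := by rw [div_lt_one hbpos]; exact hab
    have hg := MRg_pos_expand ht0.le ht1
    have habc : 0 < a + MRc * b := by nlinarith [MRc_pos]
    have e1 : Real.log (a / Q) = Real.log a - Real.log Q := Real.log_div hapos.ne' hQpos.ne'
    have e2 : Real.log (b / Q) = Real.log b - Real.log Q := Real.log_div hbpos.ne' hQpos.ne'
    have e3 : Real.log (a / b) = Real.log a - Real.log b := Real.log_div hapos.ne' hbpos.ne'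
    have e4 : Real.log (a / b + MRc) = Real.log (a + MRc * b) - Real.log b := by
      rw [show a / b + MRc = (a + MRc * b) / b by field_simp; try ring]
      exact Real.log_div habc.ne' hbpos.ne'
    have hmono : Real.log (a + MRc * b) - 1 ≤ Real.log Q := by
      have hle : (a + MRc * b) / Real.exp 1 ≤ Q := by
        rw [div_le_iff₀ hEpos, hQdef]
        unfold MRc
        nlinarith [hαE, hab]
      have := Real.log_le_log (by positivity) hle
      rwa [Real.log_div habc.ne' hEpos.ne', Real.log_exp] at this
    have h := mul_pos hbpos hg
    rw [e3, e4] at h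
    have expand : b * (a / b * (Real.log a - Real.log b)
        + (1 - a / b) * (Real.log (a + MRc * b) - Real.log b))
        = a * (Real.log a - Real.log b)
          + (b - a) * (Real.log (a + MRc * b) - Real.log b) := by
      field_simp
      try ring
    rw [expand] at h
    have hprod := mul_le_mul_of_nonneg_left hmono (sub_pos.mpr hab).le
    rw [e1, e2]
    nlinarith [h, hprod]

/-- pointwise inequality, nonnegative version -/
lemma MR_key {α a b : ℝ} (hα : 0 < α) (hα2 : α ≤ (Real.exp 1)⁻¹)
    (ha : 0 ≤ a) (hb : 0 ≤ b) :
    0 ≤ a * Real.log (a / (α * a + (1 - α) * b))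
      - b * Real.log (b / (α * a + (1 - α) * b)) - (a - b) := by
  have hE : (2:ℝ) < Real.exp 1 := MR_two_lt_e'
  have hEpos : (0:ℝ) < Real.exp 1 := by linarith
  have hαE : α * Real.exp 1 ≤ 1 := by
    have := mul_le_mul_of_nonneg_right hα2 hEpos.le
    rwa [inv_mul_cancel₀ hEpos.ne'] at this
  have hα1 : α < 1 := by nlinarith
  have h1α : (0:ℝ) < 1 - α := by linarith
  rcases lt_trichotomy a b with hab | rfl | hab
  · exact (MR_key_strict hα hα2 ha hab).le
  · simp
  · -- a > b
    set Q : ℝ := α * a + (1 - α) * b with hQdef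
    have hapos : 0 < a := lt_of_le_of_lt hb hab
    have hQpos : 0 < Q := by
      have h1 : 0 < α * a := mul_pos hα hapos
      have h2 : 0 ≤ (1 - α) * b := mul_nonneg h1α.le hb
      rw [hQdef]; linarith
    rcases eq_or_lt_of_le hb with h0 | hbpos
    · -- b = 0
      rw [← h0]
      have hQ0 : Q = α * a := by rw [hQdef, ← h0]; ring
      have haq : a / Q = α⁻¹ := by
        rw [hQ0, mul_comm]
        exact div_mul_cancel_left₀ hapos.ne' _
      rw [haq, Real.log_inv]
      have hlog : Real.log α ≤ -1 := by
        rw [show (-1 : ℝ) = Real.log (Real.exp 1)⁻¹ by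
          rw [← Real.exp_neg (1:ℝ), Real.log_exp]]
        exact Real.log_le_log hα hα2
      nlinarith [hlog, hapos]
    · -- 0 < b < a : use MRp
      have ha' : a ≠ 0 := hapos.ne'
      have hs0 : 0 < b / a := by positivity
      have hs1 : b / a < 1 := by rw [div_lt_one hapos]; exact hab
      have hp := MRp_nonneg_expand hs0.le hs1.le
      have habc : 0 < a + MRc * b := by nlinarith [MRc_pos]
      have e1 : Real.log (a / Q) = Real.log a - Real.log Q := Real.log_div hapos.ne' hQpos.ne'
      have e2 : Real.log (b / Q) = Real.log b - Real.log Q := Real.log_div hbpos.ne' hQpos.ne'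
      have e3 : Real.log (b / a) = Real.log b - Real.log a := Real.log_div hbpos.ne' hapos.ne'
      have e4 : Real.log (1 + MRc * (b / a)) = Real.log (a + MRc * b) - Real.log a := by
        rw [show 1 + MRc * (b / a) = (a + MRc * b) / a by field_simp; try ring]
        exact Real.log_div habc.ne' hapos.ne'
      have hmono : Real.log Q ≤ Real.log (a + MRc * b) - 1 := by
        have hle : Q ≤ (a + MRc * b) / Real.exp 1 := by
          rw [le_div_iff₀ hEpos, hQdef]
          unfold MRc
          nlinarith [hαE, hab]
        have := Real.log_le_log hQpos hle
        rwa [Real.log_div habc.ne' hEpos.ne', Real.log_exp] at this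
      have h := mul_nonneg hapos.le hp
      rw [e3, e4] at h
      have expand : a * (-(b / a * (Real.log b - Real.log a))
          - (1 - b / a) * (Real.log (a + MRc * b) - Real.log a))
          = -(b * (Real.log b - Real.log a))
            - (a - b) * (Real.log (a + MRc * b) - Real.log a) := by
        field_simp
        try ring
      rw [expand] at h
      have hprod := mul_le_mul_of_nonneg_left hmono (sub_pos.mpr hab).le
      rw [e1, e2]
      nlinarith [h, hprod]


/-- derivative of one summand of the mutual information -/
lemma MR_term_hasDeriv (a b : ℝ) (ha : 0 ≤ a) (hb : 0 ≤ b) {α : ℝ} (hα : 0 < α) (hα1 : α < 1) :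
    HasDerivAt (fun α : ℝ => α * a * Real.log (a / (α * a + (1 - α) * b))
        + (1 - α) * b * Real.log (b / (α * a + (1 - α) * b)))
      (a * Real.log (a / (α * a + (1 - α) * b))
        - b * Real.log (b / (α * a + (1 - α) * b)) - (a - b)) α := by
  rcases eq_or_lt_of_le ha with ha0 | hapos
  · rcases eq_or_lt_of_le hb with hb0 | hbpos
    · -- a = 0, b = 0
      rw [← ha0, ← hb0]
      simpa using hasDerivAt_const α (0:ℝ)
    · -- a = 0, b > 0
      rw [← ha0]
      have h1α : (0:ℝ) < 1 - α := by linarith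
      have hG : HasDerivAt (fun α : ℝ => -(b * ((1 - α) * Real.log (1 - α))))
          (b * (Real.log (1 - α) + 1)) α := by
        have hlin : HasDerivAt (fun α : ℝ => 1 - α) (-1) α := by
          exact (hasDerivAt_id α).const_sub 1
        have hml := (Real.hasDerivAt_mul_log h1α.ne').comp α hlin
        have := (hml.const_mul b).neg
        refine this.congr_deriv ?_
        ring
      have hEq : (fun α : ℝ => (0:ℝ) * Real.log ((0:ℝ) / (α * 0 + (1 - α) * b)) * α
          + (1 - α) * b * Real.log (b / (α * 0 + (1 - α) * b)))
          =ᶠ[nhds α] (fun α : ℝ => -(b * ((1 - α) * Real.log (1 - α)))) := by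
        have hmem : Set.Iio (1:ℝ) ∈ nhds α := Iio_mem_nhds hα1
        filter_upwards [hmem] with x hx
        have hx1 : (0:ℝ) < 1 - x := by simpa using hx
        have : b / (x * 0 + (1 - x) * b) = (1 - x)⁻¹ := by
          rw [mul_zero, zero_add, mul_comm]
          exact div_mul_cancel_left₀ hbpos.ne' _
        rw [this, Real.log_inv]
        ring
      have hEq' : (fun α : ℝ => α * (0:ℝ) * Real.log ((0:ℝ) / (α * 0 + (1 - α) * b))
          + (1 - α) * b * Real.log (b / (α * 0 + (1 - α) * b)))
          =ᶠ[nhds α] (fun α : ℝ => -(b * ((1 - α) * Real.log (1 - α)))) := by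
        refine hEq.mono fun x hx => ?_
        rw [← hx]; ring
      have hF := hG.congr_of_eventuallyEq hEq'
      refine hF.congr_deriv ?_
      have h1 : b / (α * 0 + (1 - α) * b) = (1 - α)⁻¹ := by
        rw [mul_zero, zero_add, mul_comm]
        exact div_mul_cancel_left₀ hbpos.ne' _
      rw [h1, Real.log_inv]
      ring
  · rcases eq_or_lt_of_le hb with hb0 | hbpos
    · -- a > 0, b = 0  (duplicated path since rcases order; handle same as above)
      rw [← hb0]
      have hG : HasDerivAt (fun α : ℝ => -(a * (α * Real.log α)))
          (-(a * (Real.log α + 1))) α := by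
        have := ((Real.hasDerivAt_mul_log hα.ne').const_mul a).neg
        exact this
      have hEq' : (fun α : ℝ => α * a * Real.log (a / (α * a + (1 - α) * 0))
          + (1 - α) * (0:ℝ) * Real.log ((0:ℝ) / (α * a + (1 - α) * 0)))
          =ᶠ[nhds α] (fun α : ℝ => -(a * (α * Real.log α))) := by
        have hmem : Set.Ioi (0:ℝ) ∈ nhds α := Ioi_mem_nhds hα
        filter_upwards [hmem] with x hx
        have hx0 : (0:ℝ) < x := hx
        have : a / (x * a + (1 - x) * 0) = x⁻¹ := by
          rw [mul_zero, add_zero, mul_comm]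
          exact div_mul_cancel_left₀ hapos.ne' _
        rw [this, Real.log_inv]
        ring
      have hF := hG.congr_of_eventuallyEq hEq'
      refine hF.congr_deriv ?_
      have h1 : a / (α * a + (1 - α) * 0) = α⁻¹ := by
        rw [mul_zero, add_zero, mul_comm]
        exact div_mul_cancel_left₀ hapos.ne' _
      rw [h1, Real.log_inv]
      ring
    · -- a > 0, b > 0
      have hQ : ∀ x : ℝ, 0 ≤ x → x ≤ 1 → 0 < x * a + (1 - x) * b := by
        intro x hx0 hx1
        rcases eq_or_lt_of_le hx1 with rfl | hx1'
        · nlinarith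
        · nlinarith
      have hQα : 0 < α * a + (1 - α) * b := hQ α hα.le hα1.le
      have hQcont : Continuous (fun x : ℝ => x * a + (1 - x) * b) := by continuity
      have hopen : IsOpen {x : ℝ | 0 < x * a + (1 - x) * b} :=
        isOpen_lt continuous_const hQcont
      have hmem : {x : ℝ | 0 < x * a + (1 - x) * b} ∈ nhds α :=
        hopen.mem_nhds hQα
      have hQd : HasDerivAt (fun x : ℝ => x * a + (1 - x) * b) (a - b) α := by
        have h1 : HasDerivAt (fun x : ℝ => x * a) a α := by
          simpa using (hasDerivAt_id α).mul_const a
        have h2 : HasDerivAt (fun x : ℝ => (1 - x) * b) (-b) α := by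
          have hlin : HasDerivAt (fun x : ℝ => 1 - x) (-1) α := by
            exact (hasDerivAt_id α).const_sub 1
          simpa using hlin.mul_const b
        exact (h1.add h2).congr_deriv (by ring)
      have hlogQ : HasDerivAt (fun x : ℝ => Real.log (x * a + (1 - x) * b))
          ((a - b) / (α * a + (1 - α) * b)) α := by
        have := hQd.log hQα.ne'
        simpa [div_eq_mul_inv] using this
      have h1 : HasDerivAt (fun x : ℝ => x * a * (Real.log a - Real.log (x * a + (1 - x) * b)))
          (a * (Real.log a - Real.log (α * a + (1 - α) * b))
            + α * a * (0 - (a - b) / (α * a + (1 - α) * b))) α := by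
        have hxa : HasDerivAt (fun x : ℝ => x * a) a α := by
          simpa using (hasDerivAt_id α).mul_const a
        exact hxa.mul ((hasDerivAt_const α (Real.log a)).sub hlogQ)
      have h2 : HasDerivAt (fun x : ℝ => (1 - x) * b * (Real.log b - Real.log (x * a + (1 - x) * b)))
          ((-b) * (Real.log b - Real.log (α * a + (1 - α) * b))
            + (1 - α) * b * (0 - (a - b) / (α * a + (1 - α) * b))) α := by
        have hxb : HasDerivAt (fun x : ℝ => (1 - x) * b) (-b) α := by
          have hlin : HasDerivAt (fun x : ℝ => 1 - x) (-1) α := by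
            exact (hasDerivAt_id α).const_sub 1
          simpa using hlin.mul_const b
        exact hxb.mul ((hasDerivAt_const α (Real.log b)).sub hlogQ)
      have hG := h1.add h2
      have hEq' : (fun x : ℝ => x * a * Real.log (a / (x * a + (1 - x) * b))
          + (1 - x) * b * Real.log (b / (x * a + (1 - x) * b)))
          =ᶠ[nhds α] (fun x : ℝ => x * a * (Real.log a - Real.log (x * a + (1 - x) * b))
            + (1 - x) * b * (Real.log b - Real.log (x * a + (1 - x) * b))) := by
        filter_upwards [hmem] with x hx
        have hx0 : 0 < x * a + (1 - x) * b := hx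
        rw [Real.log_div hapos.ne' hx0.ne', Real.log_div hbpos.ne' hx0.ne']
      have hF := hG.congr_of_eventuallyEq hEq'
      refine hF.congr_deriv ?_
      rw [Real.log_div hapos.ne' hQα.ne', Real.log_div hbpos.ne' hQα.ne']
      have hQne := hQα.ne'
      have key : (α * a + (1 - α) * b) * ((a - b) / (α * a + (1 - α) * b)) = a - b :=
        mul_div_cancel₀ _ hQne
      linear_combination (-1 : ℝ) * key



lemma MR_side {Y : Type*} [Fintype Y]
    (P₁ P₂ : Y → ℝ)
    (hP₁ : ∀ y, 0 ≤ P₁ y) (hP₁sum : ∑ y, P₁ y = 1)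
    (hP₂ : ∀ y, 0 ≤ P₂ y) (hP₂sum : ∑ y, P₂ y = 1)
    (hne : P₁ ≠ P₂)
    (I : ℝ → ℝ)
    (hI : ∀ α, I α = ∑ y, (α * P₁ y * Real.log (P₁ y / (α * P₁ y + (1 - α) * P₂ y))
      + (1 - α) * P₂ y * Real.log (P₂ y / (α * P₁ y + (1 - α) * P₂ y))))
    (αstar : ℝ) (h0 : 0 ≤ αstar) (h1 : αstar ≤ 1)
    (hmax : ∀ α ∈ Set.Icc (0 : ℝ) 1, I α ≤ I αstar) :
    (Real.exp 1)⁻¹ < αstar := by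
  have hE : (2:ℝ) < Real.exp 1 := by
    have := Real.exp_one_gt_d9; norm_num at this ⊢; linarith
  have hEpos : (0:ℝ) < Real.exp 1 := by linarith
  by_contra hcon
  push_neg at hcon
  -- there is a point where P₁ < P₂
  have hex : ∃ y, P₁ y < P₂ y := by
    by_contra h
    push_neg at h
    have hall : ∀ y, P₁ y = P₂ y := by
      intro y
      by_contra hne2
      have hlt : P₂ y < P₁ y := lt_of_le_of_ne (h y) fun hc => hne2 hc.symm
      have hsum : ∑ y, P₂ y < ∑ y, P₁ y :=
        Finset.sum_lt_sum (fun i _ => h i) ⟨y, Finset.mem_univ y, hlt⟩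
      rw [hP₁sum, hP₂sum] at hsum
      exact lt_irrefl 1 hsum
    exact hne (funext hall)
  obtain ⟨y₀, hy₀⟩ := hex
  rcases eq_or_lt_of_le h0 with heq | hpos
  · -- αstar = 0
    have hI0 : I αstar = 0 := by
      rw [← heq, hI]
      apply Finset.sum_eq_zero
      intro y _
      rcases eq_or_lt_of_le (hP₂ y) with h2 | h2
      · rw [← h2]; simp
      · have : (0:ℝ) * P₁ y + (1 - 0) * P₂ y = P₂ y := by ring
        rw [this, div_self h2.ne', Real.log_one]
        ring
    have hIhalf : 0 < I (1/2) := by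
      rw [hI]
      apply Finset.sum_pos'
      · intro y _
        set q : ℝ := (1/2 : ℝ) * P₁ y + (1 - 1/2) * P₂ y with hq
        rcases eq_or_lt_of_le (add_nonneg (hP₁ y) (hP₂ y)) with hz | hz
        · have h1 : P₁ y = 0 := by nlinarith [hP₁ y, hP₂ y]
          have h2 : P₂ y = 0 := by nlinarith [hP₁ y, hP₂ y]
          rw [h1, h2]; simp
        · have hqpos : 0 < q := by rw [hq]; nlinarith
          have g1 := MR_gibbs (hP₁ y) hqpos
          have g2 := MR_gibbs (hP₂ y) hqpos
          nlinarith [g1, g2]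
      · refine ⟨y₀, Finset.mem_univ y₀, ?_⟩
        set q : ℝ := (1/2 : ℝ) * P₁ y₀ + (1 - 1/2) * P₂ y₀ with hq
        have hqpos : 0 < q := by
          have := hP₁ y₀
          have h2 : 0 < P₂ y₀ := lt_of_le_of_lt (hP₁ y₀) hy₀
          rw [hq]; nlinarith
        have hne1 : P₁ y₀ ≠ q := by rw [hq]; intro hc; nlinarith
        have hne2 : P₂ y₀ ≠ q := by rw [hq]; intro hc; nlinarith
        have g1 := MR_gibbs_strict (hP₁ y₀) hqpos hne1
        have g2 := MR_gibbs_strict (hP₂ y₀) hqpos hne2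
        nlinarith [g1, g2]
    have := hmax (1/2) ⟨by norm_num, by norm_num⟩
    rw [hI0] at this
    linarith
  · -- 0 < αstar ≤ e⁻¹
    have hEinv1 : (Real.exp 1)⁻¹ < 1 := by
      rw [inv_lt_one_iff₀]; right; linarith
    have hα1 : αstar < 1 := lt_of_le_of_lt hcon hEinv1
    have hIfun : I = fun α : ℝ => ∑ y, (α * P₁ y * Real.log (P₁ y / (α * P₁ y + (1 - α) * P₂ y))
        + (1 - α) * P₂ y * Real.log (P₂ y / (α * P₁ y + (1 - α) * P₂ y))) := funext hI
    have hderiv : HasDerivAt I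
        (∑ y, (P₁ y * Real.log (P₁ y / (αstar * P₁ y + (1 - αstar) * P₂ y))
          - P₂ y * Real.log (P₂ y / (αstar * P₁ y + (1 - αstar) * P₂ y))
          - (P₁ y - P₂ y))) αstar := by
      rw [hIfun]
      exact HasDerivAt.fun_sum fun y _ => MR_term_hasDeriv (P₁ y) (P₂ y) (hP₁ y) (hP₂ y) hpos hα1
    have hlocal : IsLocalMax I αstar := by
      have hmem : Set.Icc (0:ℝ) 1 ∈ nhds αstar := Icc_mem_nhds hpos hα1
      exact Filter.eventually_of_mem hmem fun x hx => hmax x hx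
    have hD0 := hlocal.hasDerivAt_eq_zero hderiv
    have hDpos : 0 < ∑ y, (P₁ y * Real.log (P₁ y / (αstar * P₁ y + (1 - αstar) * P₂ y))
          - P₂ y * Real.log (P₂ y / (αstar * P₁ y + (1 - αstar) * P₂ y))
          - (P₁ y - P₂ y)) := by
      apply Finset.sum_pos'
      · intro y _
        exact MR_key hpos hcon (hP₁ y) (hP₂ y)
      · exact ⟨y₀, Finset.mem_univ y₀, MR_key_strict hpos hcon (hP₁ y₀) hy₀⟩
    rw [hD0] at hDpos
    exact lt_irrefl 0 hDpos

/-- For a binary-input DMC with distinct rows `P₁ ≠ P₂` on a finite output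
alphabet `Y` with `|Y| ≥ 2`, any maximizer `α⋆ ∈ [0,1]` of the mutual
information `I(α)` satisfies `1/e < α⋆ < 1 - 1/e`. -/
theorem capacity_achieving_binary_input_mem_Ioo {Y : Type*} [Fintype Y]
    (hY : 2 ≤ Fintype.card Y)
    (P₁ P₂ : Y → ℝ)
    (hP₁ : ∀ y, 0 ≤ P₁ y) (hP₁sum : ∑ y, P₁ y = 1)
    (hP₂ : ∀ y, 0 ≤ P₂ y) (hP₂sum : ∑ y, P₂ y = 1)
    (hne : P₁ ≠ P₂)
    (Q : ℝ → Y → ℝ) (hQ : ∀ α y, Q α y = α * P₁ y + (1 - α) * P₂ y)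
    (I : ℝ → ℝ)
    (hI : ∀ α, I α = ∑ y, (α * P₁ y * Real.log (P₁ y / Q α y)
      + (1 - α) * P₂ y * Real.log (P₂ y / Q α y)))
    (αstar : ℝ) (hαstar : αstar ∈ Set.Icc (0 : ℝ) 1)
    (hmax : ∀ α ∈ Set.Icc (0 : ℝ) 1, I α ≤ I αstar) :
    (Real.exp 1)⁻¹ < αstar ∧ αstar < 1 - (Real.exp 1)⁻¹ := by
  have hI' : ∀ α, I α = ∑ y, (α * P₁ y * Real.log (P₁ y / (α * P₁ y + (1 - α) * P₂ y))
      + (1 - α) * P₂ y * Real.log (P₂ y / (α * P₁ y + (1 - α) * P₂ y))) := by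
    intro α
    rw [hI α]
    exact Finset.sum_congr rfl fun y _ => by rw [hQ]
  constructor
  · exact MR_side P₁ P₂ hP₁ hP₁sum hP₂ hP₂sum hne I hI' αstar hαstar.1 hαstar.2 hmax
  · -- apply the side lemma to the swapped channel
    set J : ℝ → ℝ := fun α => I (1 - α) with hJdef
    have hJ : ∀ α, J α = ∑ y, (α * P₂ y * Real.log (P₂ y / (α * P₂ y + (1 - α) * P₁ y))
        + (1 - α) * P₁ y * Real.log (P₁ y / (α * P₂ y + (1 - α) * P₁ y))) := by
      intro α
      show I (1 - α) = _
      rw [hI' (1 - α)]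
      apply Finset.sum_congr rfl
      intro y _
      have h2 : 1 - (1 - α) = α := by ring
      rw [h2, add_comm ((1 - α) * P₁ y) (α * P₂ y)]
      ring
    have hmem : 1 - αstar ∈ Set.Icc (0:ℝ) 1 := ⟨by linarith [hαstar.2], by linarith [hαstar.1]⟩
    have hmaxJ : ∀ α ∈ Set.Icc (0:ℝ) 1, J α ≤ J (1 - αstar) := by
      intro α hα
      have h1 : (1:ℝ) - α ∈ Set.Icc (0:ℝ) 1 := ⟨by linarith [hα.2], by linarith [hα.1]⟩
      have := hmax (1 - α) h1
      have h2 : J (1 - αstar) = I αstar := by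
        rw [hJdef]
        norm_num
      rw [h2]
      exact this
    have := MR_side P₂ P₁ hP₂ hP₂sum hP₁ hP₁sum (Ne.symm hne) J hJ (1 - αstar)
      (by linarith [hαstar.2]) (by linarith [hαstar.1]) hmaxJ
    linarith
end

section
/- Consider a discrete memoryless channel with finite input alphabet $\mathcal{X} = \{0, 1, \dots, m-1\}$, finite output alphabet $\mathcal{Y} = \{0, 1, \dots, n-1\}$, and transition probabilities $W(y|x)$. For an input distribution $P$ on $\mathcal{X}$, let $I(P) = \sum_{x \in \mathcal{X}} \sum_{y \in \mathcal{Y}} P(x) W(y|x) \log\frac{W(y|x)}{\sum_{x'} P(x') W(y|x')}$, and let $C = \max_P I(P)$ over all input distributions. If $C > 0$ and $P^*$ is an input distribution with $I(P^*) = C$, then $\max_{x \in \mathcal{X}} P^*(x) < 1 - \frac{1}{e}$. -/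
open BigOperators

open Real Set Filter Topology

set_option linter.unusedSectionVars false

noncomputable def phiF (s a : ℝ) : ℝ := (1 - (1-s)*a)/s
noncomputable def hF (s a : ℝ) : ℝ :=
  phiF s a * Real.log (phiF s a) - a * Real.log a + (a-1)/s
noncomputable def kF (s a : ℝ) : ℝ := (1-s) * Real.log (phiF s a) + s * Real.log a

section core
variable {s : ℝ} (hs0 : 0 < s) (hs2 : s < 1/2)

include hs0 in
lemma phiF_one : phiF s 1 = 1 := by
  unfold phiF; field_simp; ring

include hs0 in
lemma hF_one : hF s 1 = 0 := by
  unfold hF; rw [phiF_one hs0]; simp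

include hs0 in
lemma kF_one : kF s 1 = 0 := by
  unfold kF; rw [phiF_one hs0]; simp

include hs0 hs2 in
lemma phiF_antitone {a b : ℝ} (hab : a ≤ b) : phiF s b ≤ phiF s a := by
  unfold phiF
  have h1 : (0:ℝ) < 1 - s := by linarith
  apply div_le_div_of_nonneg_right ?_ hs0.le |>.trans_eq rfl
  nlinarith

include hs0 hs2 in
lemma phiF_pos_of_lt_one {a : ℝ} (ha : a ≤ 1) : 0 < phiF s a := by
  have h := phiF_antitone hs0 hs2 ha
  rw [phiF_one hs0] at h; linarith

lemma continuous_hF : Continuous (hF s) := by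
  unfold hF phiF
  have h1 : Continuous fun x : ℝ => x * Real.log x := Real.continuous_mul_log
  fun_prop

include hs0 in
lemma hasDerivAt_phiF (a : ℝ) : HasDerivAt (phiF s) (-(1-s)/s) a := by
  unfold phiF
  have h := (((hasDerivAt_id a).const_mul (1-s)).const_sub 1).div_const s
  simp only [id_eq, mul_one] at h
  exact h

include hs0 in
lemma hasDerivAt_kF {a : ℝ} (ha : 0 < a) (hφ : 0 < phiF s a) :
    HasDerivAt (kF s) (s/a - (1-s)^2/(s * phiF s a)) a := by
  have h1 : HasDerivAt (fun x => Real.log (phiF s x)) ((-(1-s)/s) / phiF s a) a :=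
    (hasDerivAt_phiF hs0 a).log hφ.ne'
  have h2 : HasDerivAt (fun x : ℝ => Real.log x) a⁻¹ a := Real.hasDerivAt_log ha.ne'
  have := (h1.const_mul (1-s)).add (h2.const_mul s)
  refine this.congr_deriv ?_
  field_simp
  ring

include hs0 in
lemma hasDerivAt_hF {a : ℝ} (ha : 0 < a) (hφ : 0 < phiF s a) :
    HasDerivAt (hF s) (-(kF s a)/s) a := by
  have hml : ∀ {x : ℝ}, x ≠ 0 → HasDerivAt (fun y : ℝ => y * Real.log y) (Real.log x + 1) x := by
    intro x hx
    have := (hasDerivAt_id x).mul (Real.hasDerivAt_log hx)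
    refine this.congr_deriv ?_
    field_simp; simp only [id_eq]; ring
  have h1 : HasDerivAt (fun x => phiF s x * Real.log (phiF s x))
      ((Real.log (phiF s a) + 1) * (-(1-s)/s)) a :=
    (hml hφ.ne').comp a (hasDerivAt_phiF hs0 a)
  have h2 : HasDerivAt (fun x : ℝ => x * Real.log x) (Real.log a + 1) a := hml ha.ne'
  have h3 : HasDerivAt (fun x : ℝ => (x-1)/s) (1/s) a := by
    simpa using ((hasDerivAt_id a).sub_const 1).div_const s
  have := (h1.sub h2).add h3
  refine this.congr_deriv ?_
  unfold kF
  field_simp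
  ring

include hs0 hs2 in
lemma kd_neg {a : ℝ} (ha : s/(1-s) < a) (hφ : 0 < phiF s a) :
    s/a - (1-s)^2/(s * phiF s a) < 0 := by
  have h1 : (0:ℝ) < 1 - s := by linarith
  have ha0 : 0 < a := lt_trans (by positivity) ha
  rw [sub_neg, div_lt_div_iff₀ ha0 (by positivity)]
  have hsa : s < a * (1-s) := by
    rw [div_lt_iff₀ h1] at ha; linarith
  have hφ' : s * phiF s a = 1 - (1-s)*a := by
    unfold phiF; field_simp
  nlinarith [hφ, mul_pos hs0 hφ]

include hs0 hs2 in
lemma kd_pos {a : ℝ} (ha0 : 0 < a) (ha : a < s/(1-s)) :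
    0 < s/a - (1-s)^2/(s * phiF s a) := by
  have h1 : (0:ℝ) < 1 - s := by linarith
  have hsa : a * (1-s) < s := by
    rw [lt_div_iff₀ h1] at ha
    linarith [mul_comm a (1-s)]
  have hφ : 0 < phiF s a := by
    unfold phiF
    apply div_pos ?_ hs0
    nlinarith
  rw [sub_pos, div_lt_div_iff₀ (by positivity) ha0]
  have hφ' : s * phiF s a = 1 - (1-s)*a := by
    unfold phiF; field_simp
  nlinarith

end core

section core2
variable {s : ℝ} (hs0 : 0 < s) (hs2 : s < 1/2)

include hs0 hs2 in
lemma a0_lt_one : s/(1-s) < 1 := by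
  rw [div_lt_one (by linarith)]; linarith

include hs0 hs2 in
lemma continuousOn_kF {A : Set ℝ} (h : ∀ x ∈ A, 0 < x ∧ 0 < phiF s x) :
    ContinuousOn (kF s) A := by
  unfold kF
  apply ContinuousOn.add
  · apply continuousOn_const.mul
    apply ContinuousOn.log
    · unfold phiF; fun_prop
    · exact fun x hx => (h x hx).2.ne'
  · apply continuousOn_const.mul
    exact ContinuousOn.log continuousOn_id (fun x hx => (h x hx).1.ne')

include hs0 hs2 in
lemma kF_mono_piece {a b : ℝ} (ha : 0 < a) (hab : a < b) (hb : b ≤ s/(1-s)) :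
    kF s a < kF s b := by
  have hb1 : b < 1 := lt_of_le_of_lt hb (a0_lt_one hs0 hs2)
  have key : StrictMonoOn (kF s) (Icc a b) := by
    apply strictMonoOn_of_deriv_pos (convex_Icc a b)
    · apply continuousOn_kF hs0 hs2
      intro x hx
      exact ⟨ha.trans_le hx.1, phiF_pos_of_lt_one hs0 hs2 (hx.2.trans hb1.le)⟩
    · intro x hx
      rw [interior_Icc] at hx
      have hx0 : 0 < x := ha.trans hx.1
      have hφ : 0 < phiF s x := phiF_pos_of_lt_one hs0 hs2 (hx.2.le.trans hb1.le)
      rw [(hasDerivAt_kF hs0 hx0 hφ).deriv]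
      exact kd_pos hs0 hs2 hx0 (hx.2.trans_le hb)
  exact key (left_mem_Icc.2 hab.le) (right_mem_Icc.2 hab.le) hab

include hs0 hs2 in
lemma kF_anti_piece {a b : ℝ} (ha : s/(1-s) ≤ a) (hab : a < b) (hφb : 0 < phiF s b) :
    kF s b < kF s a := by
  have ha0 : 0 < a := lt_of_lt_of_le (div_pos hs0 (by linarith)) ha
  have key : StrictAntiOn (kF s) (Icc a b) := by
    apply strictAntiOn_of_deriv_neg (convex_Icc a b)
    · apply continuousOn_kF hs0 hs2
      intro x hx
      refine ⟨ha0.trans_le hx.1, lt_of_lt_of_le hφb (phiF_antitone hs0 hs2 hx.2)⟩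
    · intro x hx
      rw [interior_Icc] at hx
      have hx0 : 0 < x := ha0.trans hx.1
      have hφ : 0 < phiF s x := lt_of_lt_of_le hφb (phiF_antitone hs0 hs2 hx.2.le)
      rw [(hasDerivAt_kF hs0 hx0 hφ).deriv]
      exact kd_neg hs0 hs2 (lt_of_le_of_lt ha hx.1) hφ
  exact key (left_mem_Icc.2 hab.le) (right_mem_Icc.2 hab.le) hab

include hs0 hs2 in
lemma kF_pos_mid {x : ℝ} (hx0 : s/(1-s) ≤ x) (hx1 : x < 1) : 0 < kF s x := by
  have h := kF_anti_piece hs0 hs2 hx0 hx1 (by rw [phiF_one hs0]; norm_num)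
  rwa [kF_one hs0] at h

include hs0 hs2 in
lemma kF_neg_hi {x : ℝ} (hx : 1 < x) (hφ : 0 < phiF s x) : kF s x < 0 := by
  have h := kF_anti_piece hs0 hs2 (a0_lt_one hs0 hs2).le hx hφ
  rwa [kF_one hs0] at h

include hs0 hs2 in
lemma hF_anti_piece {a : ℝ} (ha0 : 0 < a) (ha1 : a < 1) (hka : 0 < kF s a) : 0 < hF s a := by
  have key : StrictAntiOn (hF s) (Icc a 1) := by
    apply strictAntiOn_of_deriv_neg (convex_Icc a 1) continuous_hF.continuousOn
    intro x hx
    rw [interior_Icc] at hx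
    have hx0 : 0 < x := ha0.trans hx.1
    have hφ : 0 < phiF s x := phiF_pos_of_lt_one hs0 hs2 hx.2.le
    rw [(hasDerivAt_hF hs0 hx0 hφ).deriv]
    have hk : 0 < kF s x := by
      rcases le_or_gt x (s/(1-s)) with h|h
      · exact lt_trans hka (kF_mono_piece hs0 hs2 ha0 hx.1 h)
      · exact kF_pos_mid hs0 hs2 h.le hx.2
    exact div_neg_of_neg_of_pos (neg_neg_of_pos hk) hs0
  have h := key (left_mem_Icc.2 ha1.le) (right_mem_Icc.2 ha1.le) ha1
  rwa [hF_one hs0] at h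

include hs0 hs2 in
lemma hF_mono_low {a : ℝ} (ha0 : 0 < a) (ha1 : a < 1) (hka : kF s a ≤ 0)
    (h0 : 0 ≤ hF s 0) : 0 < hF s a := by
  have haa0 : a ≤ s/(1-s) := by
    by_contra h
    push_neg at h
    exact absurd (kF_pos_mid hs0 hs2 h.le ha1) (not_lt.2 hka)
  have key : StrictMonoOn (hF s) (Icc 0 a) := by
    apply strictMonoOn_of_deriv_pos (convex_Icc 0 a) continuous_hF.continuousOn
    intro x hx
    rw [interior_Icc] at hx
    have hφ : 0 < phiF s x := phiF_pos_of_lt_one hs0 hs2 (hx.2.le.trans ha1.le)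
    rw [(hasDerivAt_hF hs0 hx.1 hφ).deriv]
    have hk : kF s x < 0 := lt_of_lt_of_le (kF_mono_piece hs0 hs2 hx.1 hx.2 haa0) hka
    exact div_pos (by linarith) hs0
  have h := key (left_mem_Icc.2 ha0.le) (right_mem_Icc.2 ha0.le) ha0
  linarith

include hs0 hs2 in
lemma hF_mono_hi {a : ℝ} (ha1 : 1 < a) (hφa : 0 < phiF s a) : 0 < hF s a := by
  have key : StrictMonoOn (hF s) (Icc 1 a) := by
    apply strictMonoOn_of_deriv_pos (convex_Icc 1 a) continuous_hF.continuousOn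
    intro x hx
    rw [interior_Icc] at hx
    have hx0 : (0:ℝ) < x := by linarith [hx.1]
    have hφ : 0 < phiF s x := lt_of_lt_of_le hφa (phiF_antitone hs0 hs2 hx.2.le)
    rw [(hasDerivAt_hF hs0 hx0 hφ).deriv]
    have hk : kF s x < 0 := kF_neg_hi hs0 hs2 hx.1 hφ
    exact div_pos (by linarith) hs0
  have h := key (left_mem_Icc.2 ha1.le) (right_mem_Icc.2 ha1.le) ha1
  rw [hF_one hs0] at h
  linarith

include hs0 in
lemma hF_zero (hse : s ≤ (Real.exp 1)⁻¹) : 0 ≤ hF s 0 := by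
  have hlog : Real.log s ≤ -1 := by
    calc Real.log s ≤ Real.log (Real.exp 1)⁻¹ := Real.log_le_log hs0 hse
    _ = -1 := by rw [Real.log_inv, Real.log_exp]
  have h : hF s 0 = (-Real.log s - 1)/s := by
    unfold hF phiF
    rw [show (1 - (1-s)*0)/s = s⁻¹ by field_simp; ring]
    rw [Real.log_inv]
    field_simp
    ring
  rw [h]
  apply div_nonneg (by linarith) hs0.le

lemma inv_e_lt_half : (Real.exp 1)⁻¹ < 1/2 := by
  have h2 : (2:ℝ) < Real.exp 1 := by linarith [Real.exp_one_gt_d9]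
  have := inv_strictAnti₀ (by norm_num : (0:ℝ) < 2) h2
  simpa using this.trans_eq (by norm_num)

include hs0 in
lemma hF_M (hse : s ≤ (Real.exp 1)⁻¹) {a : ℝ} (hM : (1-s)*a = 1) : 0 < hF s a := by
  have hs2 : s < 1/2 := lt_of_le_of_lt hse inv_e_lt_half
  have h1 : (0:ℝ) < 1 - s := by linarith
  have ha : a = (1-s)⁻¹ := by field_simp; linarith [hM]
  have ha0 : 0 < a := by rw [ha]; positivity
  have hφ : phiF s a = 0 := by unfold phiF; rw [hM]; simp
  have hlog : Real.log a = -Real.log (1-s) := by rw [ha, Real.log_inv]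
  have hda : (a-1)/s = a := by
    rw [ha]; field_simp; ring
  have hval : hF s a = a * (1 + Real.log (1-s)) := by
    unfold hF
    rw [hφ, hlog, hda]
    simp [phiF] at hφ ⊢
    ring
  rw [hval]
  apply mul_pos ha0
  have he : (Real.exp 1)⁻¹ < 1 - s := by
    have := inv_e_lt_half
    linarith
  have := Real.log_lt_log (by positivity) he
  rw [Real.log_inv, Real.log_exp] at this
  linarith

include hs0 in
lemma hF_pos (hse : s ≤ (Real.exp 1)⁻¹) {a : ℝ} (ha0 : 0 < a) (ha1 : a ≠ 1)
    (haM : (1-s)*a ≤ 1) : 0 < hF s a := by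
  have hs2 : s < 1/2 := lt_of_le_of_lt hse inv_e_lt_half
  rcases lt_trichotomy a 1 with h|h|h
  · rcases le_or_gt (kF s a) 0 with hk|hk
    · exact hF_mono_low hs0 hs2 ha0 h hk (hF_zero hs0 hse)
    · exact hF_anti_piece hs0 hs2 ha0 h hk
  · exact absurd h ha1
  · rcases eq_or_lt_of_le haM with hM|hM
    · exact hF_M hs0 hse hM
    · apply hF_mono_hi hs0 hs2 h
      unfold phiF
      apply div_pos (by linarith) hs0

include hs0 in
lemma hF_nonneg (hse : s ≤ (Real.exp 1)⁻¹) {a : ℝ} (ha0 : 0 ≤ a)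
    (haM : (1-s)*a ≤ 1) : 0 ≤ hF s a := by
  rcases eq_or_lt_of_le ha0 with h|h
  · rw [← h]; exact hF_zero hs0 hse
  · rcases eq_or_ne a 1 with h1|h1
    · rw [h1, hF_one hs0]
    · exact (hF_pos hs0 hse h h1 haM).le

end core2

-- derivative of a single term of the mutual information along the binary slice
lemma hasDerivAt_term (w av bv c' q p : ℝ) (c : ℝ → ℝ) (hc : HasDerivAt c c' p)
    (hq : q = p * av + (1-p) * bv) (hqpos : 0 < q) (hw : w ≠ 0) :
    HasDerivAt (fun t => c t * w * Real.log (w / (t * av + (1-t) * bv)))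
      (c' * (w * (Real.log w - Real.log q)) + c p * (w * (-((av - bv)/q)))) p := by
  have hQt : HasDerivAt (fun t : ℝ => t * av + (1-t) * bv) (av - bv) p := by
    have h1 := (hasDerivAt_id p).mul_const av
    have h2 := (((hasDerivAt_id p).const_sub 1).mul_const bv)
    have h3 := h1.add h2
    simp only [id_eq] at h3
    refine h3.congr_deriv ?_
    ring
  have hfp : p * av + (1-p) * bv = q := hq.symm
  have hlog : HasDerivAt (fun t => Real.log (t*av + (1-t)*bv)) ((av - bv)/q) p := by
    have h := hQt.log (by rw [hfp]; exact hqpos.ne')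
    rwa [hfp] at h
  have h1 : HasDerivAt (fun t => c t * w) (c' * w) p := hc.mul_const w
  have h2 : HasDerivAt (fun t => Real.log w - Real.log (t*av + (1-t)*bv))
      (-((av - bv)/q)) p := by
    simpa using hlog.const_sub (Real.log w)
  have hmul := h1.mul h2
  have hev : ∀ᶠ t in 𝓝 p, 0 < t * av + (1-t) * bv := by
    have hcont : ContinuousAt (fun t : ℝ => t * av + (1-t) * bv) p := by fun_prop
    have h0 : 0 < p * av + (1-p) * bv := by rw [hfp]; exact hqpos
    exact hcont.eventually (eventually_gt_nhds h0)
  have hfeq : (fun t => c t * w * Real.log (w / (t * av + (1-t) * bv)))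
      =ᶠ[𝓝 p] (fun t => c t * w * (Real.log w - Real.log (t*av + (1-t)*bv))) := by
    filter_upwards [hev] with t ht
    rw [Real.log_div hw ht.ne']
  refine HasDerivAt.congr_of_eventuallyEq ?_ hfeq
  refine hmul.congr_deriv ?_
  rw [hfp]
  ring

set_option maxHeartbeats 1600000

/-- Main theorem: for any DMC with finite input alphabet `Fin m`, finite output
alphabet `Fin n` and transition matrix `W`, any capacity achieving input
distribution `Pstar` of a channel with positive capacity satisfies
`Pstar x < 1 - 1/e` for every input symbol `x`. -/
theorem capacity_achieving_input_lt_one_sub_inv_e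
    (m n : ℕ) (W : Fin m → Fin n → ℝ)
    (hW : ∀ x y, 0 ≤ W x y) (hWsum : ∀ x, ∑ y, W x y = 1)
    (I : (Fin m → ℝ) → ℝ)
    (hI : ∀ P : Fin m → ℝ,
      I P = ∑ x, ∑ y, P x * W x y * Real.log (W x y / ∑ x', P x' * W x' y))
    (Pstar : Fin m → ℝ)
    (hPstar : ∀ x, 0 ≤ Pstar x) (hPstarSum : ∑ x, Pstar x = 1)
    (hmax : ∀ P : Fin m → ℝ, (∀ x, 0 ≤ P x) → ∑ x, P x = 1 → I P ≤ I Pstar)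
    (hC : 0 < I Pstar) :
    ∀ x, Pstar x < 1 - (Real.exp 1)⁻¹ := by
  intro x₀
  by_contra hcon
  push_neg at hcon
  have hehalf : (Real.exp 1)⁻¹ < 1/2 := inv_e_lt_half
  set p : ℝ := Pstar x₀ with hp
  -- p ≤ 1
  have hple : p ≤ 1 := by
    rw [← hPstarSum]
    exact Finset.single_le_sum (fun i _ => hPstar i) (Finset.mem_univ x₀)
  have hp0 : 0 < p := by
    have : (0:ℝ) < 1 - (Real.exp 1)⁻¹ := by
      have := Real.exp_pos 1; nlinarith
    linarith
  -- sum over the rest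
  have hrest : ∑ x ∈ Finset.univ.erase x₀, Pstar x = 1 - p := by
    have := Finset.add_sum_erase Finset.univ Pstar (Finset.mem_univ x₀)
    rw [hPstarSum] at this
    linarith
  -- p < 1
  have hp1 : p < 1 := by
    rcases lt_or_eq_of_le hple with h | h
    · exact h
    · exfalso
      have hz : ∀ x, x ≠ x₀ → Pstar x = 0 := by
        intro x hx
        have hsum0 : ∑ x ∈ Finset.univ.erase x₀, Pstar x = 0 := by rw [hrest, ← h]; ring
        have := (Finset.sum_eq_zero_iff_of_nonneg
          (fun i _ => hPstar i)).1 hsum0 x (Finset.mem_erase.2 ⟨hx, Finset.mem_univ x⟩)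
        exact this
      have hQW : ∀ y, (∑ x', Pstar x' * W x' y) = W x₀ y := by
        intro y
        rw [← Finset.add_sum_erase Finset.univ (fun x' => Pstar x' * W x' y) (Finset.mem_univ x₀)]
        rw [Finset.sum_eq_zero (fun x hx => by
          rw [hz x (Finset.mem_erase.1 hx).1]; ring)]
        rw [← hp, h]; ring
      have hI0 : I Pstar = 0 := by
        rw [hI Pstar]
        apply Finset.sum_eq_zero
        intro x _
        apply Finset.sum_eq_zero
        intro y _
        rcases eq_or_ne x x₀ with hxx | hxx
        · subst hxx
          rw [hQW y]
          rcases eq_or_ne (W x y) 0 with hw | hw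
          · rw [hw]; ring
          · rw [div_self hw, Real.log_one]; ring
        · rw [hz x hxx]; ring
      rw [hI0] at hC; exact lt_irrefl 0 hC
  set s : ℝ := 1 - p with hs
  have hs0 : 0 < s := by rw [hs]; linarith
  have hse : s ≤ (Real.exp 1)⁻¹ := by rw [hs]; linarith
  have hs2 : s < 1/2 := lt_of_le_of_lt hse hehalf
  -- output distribution and conditional-rest distribution
  set Qd : Fin n → ℝ := fun y => ∑ x', Pstar x' * W x' y with hQd
  have hQdy : ∀ y, (∑ x', Pstar x' * W x' y) = Qd y := fun _ => rfl
  set Bv : Fin n → ℝ := fun y => (Qd y - p * W x₀ y)/s with hBv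
  have hQnn : ∀ y, 0 ≤ Qd y := fun y =>
    Finset.sum_nonneg fun x _ => mul_nonneg (hPstar x) (hW x y)
  have hQx : ∀ x y, Pstar x * W x y ≤ Qd y := fun x y =>
    Finset.single_le_sum (fun i (_ : i ∈ Finset.univ) => mul_nonneg (hPstar i) (hW i y))
      (Finset.mem_univ x)
  have hQA : ∀ y, p * W x₀ y ≤ Qd y := fun y => hQx x₀ y
  have hBnn : ∀ y, 0 ≤ Bv y := fun y => div_nonneg (by linarith [hQA y]) hs0.le
  have hQsum : ∑ y, Qd y = 1 := by
    rw [hQd]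
    rw [Finset.sum_comm]
    rw [Finset.sum_congr rfl (fun x _ => by rw [← Finset.mul_sum, hWsum x, mul_one])]
    exact hPstarSum
  have hAsum : ∑ y, W x₀ y = 1 := hWsum x₀
  have hBsum : ∑ y, Bv y = 1 := by
    have h1 : ∑ y, (Qd y - p * W x₀ y) = 1 - p := by
      rw [Finset.sum_sub_distrib, hQsum, ← Finset.mul_sum, hAsum, mul_one]
    calc ∑ y, Bv y = (∑ y, (Qd y - p * W x₀ y))/s := by rw [hBv, Finset.sum_div]
    _ = (1-p)/s := by rw [h1]
    _ = 1 := by rw [← hs]; exact div_self hs0.ne'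
  have hQzeroA : ∀ y, Qd y = 0 → W x₀ y = 0 := by
    intro y h
    have h1 := hQA y
    have h2 := hW x₀ y
    nlinarith
  have hQzeroB : ∀ y, Qd y = 0 → Bv y = 0 := by
    intro y h
    simp only [hBv]
    rw [h, hQzeroA y h]
    simp
  have hsB : ∀ y, ∑ x ∈ Finset.univ.erase x₀, Pstar x * W x y = s * Bv y := by
    intro y
    have h2 : Pstar x₀ * W x₀ y + ∑ x ∈ Finset.univ.erase x₀, Pstar x * W x y = Qd y := by
      rw [Finset.add_sum_erase Finset.univ (fun x' => Pstar x' * W x' y) (Finset.mem_univ x₀)]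
    have h3 : s * Bv y = Qd y - p * W x₀ y := by
      simp only [hBv]
      field_simp
    rw [h3, ← h2, ← hp]
    ring
  -- the slice quantities
  set u : ℝ := ∑ y, W x₀ y * Real.log (W x₀ y / Qd y) with hu
  set v : ℝ := s⁻¹ * ∑ x ∈ Finset.univ.erase x₀, ∑ y, Pstar x * W x y * Real.log (W x y / Qd y) with hv
  set wv : ℝ := ∑ y, Bv y * Real.log (Bv y / Qd y) with hwv
  -- decomposition of mutual information
  have hIdec : I Pstar = p * u + s * v := by
    rw [hI Pstar]
    simp only [hQdy]
    rw [← Finset.add_sum_erase Finset.univ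
      (fun x => ∑ y, Pstar x * W x y * Real.log (W x y / Qd y)) (Finset.mem_univ x₀)]
    congr 1
    · rw [hu, Finset.mul_sum]
      refine Finset.sum_congr rfl fun y _ => ?_
      rw [← hp]; ring
    · rw [hv, ← mul_assoc, mul_inv_cancel₀ hs0.ne', one_mul]
  -- the slice function
  have hQt : ∀ y, p * W x₀ y + (1-p) * Bv y = Qd y := by
    intro y
    simp only [hBv]
    field_simp; rw [hs]; ring
  set f : ℝ → ℝ := fun t => ∑ x, ∑ y,
      (if x = x₀ then t else Pstar x * ((1-t)/s)) * W x y *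
        Real.log (W x y / (t * W x₀ y + (1-t) * Bv y)) with hf
  have hfPp : f p = I Pstar := by
    rw [hf, hI Pstar]
    simp only [hQdy]
    refine Finset.sum_congr rfl fun x _ => Finset.sum_congr rfl fun y _ => ?_
    rw [hQt y]
    congr 2
    split_ifs with h
    · rw [h, ← hp]
    · rw [← hs, div_self hs0.ne', mul_one]
  have hfle : ∀ t ∈ Ioo (0:ℝ) 1, f t ≤ f p := by
    intro t ht
    set Pt : Fin m → ℝ := fun x => if x = x₀ then t else Pstar x * ((1-t)/s) with hPt
    have hPtnn : ∀ x, 0 ≤ Pt x := by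
      intro x
      simp only [hPt]
      split_ifs
      · exact ht.1.le
      · exact mul_nonneg (hPstar x) (div_nonneg (by linarith [ht.2]) hs0.le)
    have hPtsum : ∑ x, Pt x = 1 := by
      rw [← Finset.add_sum_erase Finset.univ Pt (Finset.mem_univ x₀)]
      simp only [hPt, if_pos rfl]
      have hrw : ∀ x ∈ Finset.univ.erase x₀,
          (if x = x₀ then t else Pstar x * ((1-t)/s)) = Pstar x * ((1-t)/s) :=
        fun x hx => by rw [if_neg (Finset.mem_erase.1 hx).1]
      rw [Finset.sum_congr rfl hrw, ← Finset.sum_mul, hrest]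
      field_simp; ring
    have hQts : ∀ y, (∑ x', Pt x' * W x' y) = t * W x₀ y + (1-t) * Bv y := by
      intro y
      rw [← Finset.add_sum_erase Finset.univ (fun x' => Pt x' * W x' y) (Finset.mem_univ x₀)]
      simp only [hPt, if_pos rfl]
      congr 1
      have hrw : ∀ x ∈ Finset.univ.erase x₀,
          (if x = x₀ then t else Pstar x * ((1-t)/s)) * W x y = ((1-t)/s) * (Pstar x * W x y) :=
        fun x hx => by rw [if_neg (Finset.mem_erase.1 hx).1]; ring
      rw [Finset.sum_congr rfl hrw, ← Finset.mul_sum, hsB y]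
      field_simp
    have hfIt : f t = I Pt := by
      rw [hf, hI Pt]
      refine Finset.sum_congr rfl fun x _ => Finset.sum_congr rfl fun y _ => ?_
      rw [hQts y]
    rw [hfIt, hfPp]
    exact hmax Pt hPtnn hPtsum
  have hloc : IsLocalMax f p := by
    apply Filter.eventually_of_mem (Ioo_mem_nhds hp0 hp1)
    exact fun t ht => hfle t ht
  -- derivative of the slice function at p
  set d : Fin m → Fin n → ℝ := fun x y =>
    (if x = x₀ then 1 else -(Pstar x/s)) * (W x y * (Real.log (W x y) - Real.log (Qd y)))
      + Pstar x * (W x y * (-((W x₀ y - Bv y)/Qd y))) with hd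
  have hderiv : HasDerivAt f (∑ x, ∑ y, d x y) p := by
    rw [hf]
    apply HasDerivAt.fun_sum
    intro x _
    apply HasDerivAt.fun_sum
    intro y _
    rcases eq_or_ne (W x y) 0 with hw0 | hw0
    · have hfun : (fun t : ℝ => (if x = x₀ then t else Pstar x * ((1-t)/s)) * W x y *
          Real.log (W x y / (t * W x₀ y + (1-t) * Bv y))) = fun _ => (0:ℝ) := by
        funext t; rw [hw0]; ring
      have h0 : d x y = 0 := by
        simp only [hd]; rw [hw0]; ring
      rw [hfun, h0]
      exact hasDerivAt_const p 0
    · rcases eq_or_ne x x₀ with hxx | hxx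
      · subst hxx
        have hWpos : 0 < W x y := lt_of_le_of_ne (hW x y) (Ne.symm hw0)
        have hqpos : 0 < Qd y := lt_of_lt_of_le (mul_pos hp0 hWpos) (hQA y)
        have H := hasDerivAt_term (W x y) (W x y) (Bv y) 1 (Qd y) p (fun t => t)
          (hasDerivAt_id p) (hQt y).symm hqpos hw0
        have hfun : (fun t : ℝ => (if x = x then t else Pstar x * ((1-t)/s)) * W x y *
            Real.log (W x y / (t * W x y + (1-t) * Bv y)))
            = fun t : ℝ => t * W x y * Real.log (W x y / (t * W x y + (1-t) * Bv y)) := by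
          funext t; rw [if_pos rfl]
        rw [hfun]
        have hval : d x y = 1 * (W x y * (Real.log (W x y) - Real.log (Qd y)))
            + p * (W x y * (-((W x y - Bv y)/Qd y))) := by
          simp only [hd]
          simp only [eq_self_iff_true, if_true]; rw [← hp]
        rw [hval]
        exact H
      · by_cases hP : Pstar x = 0
        · have hfun : (fun t : ℝ => (if x = x₀ then t else Pstar x * ((1-t)/s)) * W x y *
              Real.log (W x y / (t * W x₀ y + (1-t) * Bv y))) = fun _ => (0:ℝ) := by
            funext t; rw [if_neg hxx, hP]; ring
          have h0 : d x y = 0 := by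
            simp only [hd]; rw [if_neg hxx, hP]; ring
          rw [hfun, h0]
          exact hasDerivAt_const p 0
        · have hPpos : 0 < Pstar x := lt_of_le_of_ne (hPstar x) (Ne.symm hP)
          have hWpos : 0 < W x y := lt_of_le_of_ne (hW x y) (Ne.symm hw0)
          have hqpos : 0 < Qd y := lt_of_lt_of_le (mul_pos hPpos hWpos) (hQx x y)
          have hc : HasDerivAt (fun t : ℝ => Pstar x * ((1-t)/s)) (-(Pstar x/s)) p := by
            have h' := (((hasDerivAt_id p).const_sub 1).div_const s).const_mul (Pstar x)
            simp only [id_eq] at h'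
            refine h'.congr_deriv ?_
            field_simp
          have H := hasDerivAt_term (W x y) (W x₀ y) (Bv y) (-(Pstar x/s)) (Qd y) p
            (fun t : ℝ => Pstar x * ((1-t)/s)) hc (hQt y).symm hqpos hw0
          have hfun : (fun t : ℝ => (if x = x₀ then t else Pstar x * ((1-t)/s)) * W x y *
              Real.log (W x y / (t * W x₀ y + (1-t) * Bv y)))
              = fun t : ℝ => (Pstar x * ((1-t)/s)) * W x y *
                Real.log (W x y / (t * W x₀ y + (1-t) * Bv y)) := by
            funext t; rw [if_neg hxx]
          rw [hfun]
          have hval : d x y = -(Pstar x/s) * (W x y * (Real.log (W x y) - Real.log (Qd y)))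
              + (Pstar x * ((1-p)/s)) * (W x y * (-((W x₀ y - Bv y)/Qd y))) := by
            simp only [hd]; rw [if_neg hxx, ← hs, div_self hs0.ne', mul_one]
          rw [hval]
          exact H
  -- compute the total derivative
  have hS2 : ∑ x, ∑ y, Pstar x * (W x y * (-((W x₀ y - Bv y)/Qd y))) = 0 := by
    rw [Finset.sum_comm]
    have hyv : ∀ y ∈ Finset.univ, (∑ x, Pstar x * (W x y * (-((W x₀ y - Bv y)/Qd y))))
        = -(W x₀ y - Bv y) := by
      intro y _
      have hfac : (∑ x, Pstar x * (W x y * (-((W x₀ y - Bv y)/Qd y))))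
          = (∑ x, Pstar x * W x y) * (-((W x₀ y - Bv y)/Qd y)) := by
        rw [Finset.sum_mul]
        exact Finset.sum_congr rfl fun x _ => by ring
      rw [hfac, hQdy y]
      rcases eq_or_ne (Qd y) 0 with hq | hq
      · rw [hq, hQzeroA y hq, hQzeroB y hq]; ring
      · field_simp
    rw [Finset.sum_congr rfl hyv]
    simp only [neg_sub]
    rw [Finset.sum_sub_distrib, hBsum, hAsum, sub_self]
  have hS1 : ∑ x, ∑ y, (if x = x₀ then (1:ℝ) else -(Pstar x/s)) *
      (W x y * (Real.log (W x y) - Real.log (Qd y))) = u - v := by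
    rw [← Finset.add_sum_erase Finset.univ _ (Finset.mem_univ x₀)]
    rw [sub_eq_add_neg]
    congr 1
    · rw [hu]
      refine Finset.sum_congr rfl fun y _ => ?_
      rw [if_pos rfl, one_mul]
      rcases eq_or_ne (W x₀ y) 0 with hw0 | hw0
      · rw [hw0]; ring
      · have hqpos : 0 < Qd y :=
          lt_of_lt_of_le (mul_pos hp0 (lt_of_le_of_ne (hW x₀ y) (Ne.symm hw0))) (hQA y)
        rw [Real.log_div hw0 hqpos.ne']
    · rw [hv, Finset.mul_sum, ← Finset.sum_neg_distrib]
      refine Finset.sum_congr rfl fun x hx => ?_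
      rw [if_neg (Finset.mem_erase.1 hx).1, Finset.mul_sum, ← Finset.sum_neg_distrib]
      refine Finset.sum_congr rfl fun y _ => ?_
      rcases eq_or_ne (Pstar x) 0 with hP | hP
      · rw [hP]; ring
      · rcases eq_or_ne (W x y) 0 with hw0 | hw0
        · rw [hw0]; ring
        · have hPpos : 0 < Pstar x := lt_of_le_of_ne (hPstar x) (Ne.symm hP)
          have hWpos : 0 < W x y := lt_of_le_of_ne (hW x y) (Ne.symm hw0)
          have hqpos : 0 < Qd y := lt_of_lt_of_le (mul_pos hPpos hWpos) (hQx x y)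
          rw [Real.log_div hw0 hqpos.ne']
          ring
  have hsum : ∑ x, ∑ y, d x y = u - v := by
    have h12 : ∑ x, ∑ y, d x y
        = (∑ x, ∑ y, (if x = x₀ then (1:ℝ) else -(Pstar x/s)) *
            (W x y * (Real.log (W x y) - Real.log (Qd y))))
          + ∑ x, ∑ y, Pstar x * (W x y * (-((W x₀ y - Bv y)/Qd y))) := by
      simp only [hd, Finset.sum_add_distrib]
    rw [h12, hS1, hS2, add_zero]
  have hz : u - v = 0 := by
    have h := hloc.hasDerivAt_eq_zero hderiv
    rw [hsum] at h
    exact h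
  have huv : u = v := by linarith
  have huC : u = I Pstar := by
    rw [hIdec, ← huv, hs]
    ring
  have hupos : 0 < u := by rw [huC]; exact hC
  -- Gibbs: wv ≤ v
  have hwvle : wv ≤ v := by
    have key : ∀ x ∈ Finset.univ.erase x₀,
        (∑ y, Pstar x * W x y * Real.log (Bv y / Qd y))
          ≤ ∑ y, Pstar x * W x y * Real.log (W x y / Qd y) := by
      intro x hx
      rcases eq_or_ne (Pstar x) 0 with hP | hP
      · simp [hP]
      · have hPpos : 0 < Pstar x := lt_of_le_of_ne (hPstar x) (Ne.symm hP)
        have hterm : ∀ y ∈ Finset.univ,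
            Pstar x * W x y * Real.log (Bv y / Qd y) + Pstar x * (W x y - Bv y)
              ≤ Pstar x * W x y * Real.log (W x y / Qd y) := by
          intro y _
          rcases eq_or_ne (W x y) 0 with hw0 | hw0
          · rw [hw0]
            have := hBnn y
            nlinarith
          · have hWpos : 0 < W x y := lt_of_le_of_ne (hW x y) (Ne.symm hw0)
            have hqpos : 0 < Qd y := lt_of_lt_of_le (mul_pos hPpos hWpos) (hQx x y)
            have hBpos : 0 < Bv y := by
              have hle : Pstar x * W x y ≤ s * Bv y := by
                rw [← hsB y]
                exact Finset.single_le_sum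
                  (fun i (_ : i ∈ Finset.univ.erase x₀) => mul_nonneg (hPstar i) (hW i y)) hx
              nlinarith [mul_pos hPpos hWpos]
            have hlog : Real.log (Bv y / W x y) ≤ Bv y / W x y - 1 :=
              Real.log_le_sub_one_of_pos (div_pos hBpos hWpos)
            have hsplit : Real.log (W x y / Qd y) - Real.log (Bv y / Qd y)
                = -Real.log (Bv y / W x y) := by
              rw [Real.log_div hw0 hqpos.ne', Real.log_div hBpos.ne' hqpos.ne',
                Real.log_div hBpos.ne' hw0]
              ring
            have hdiv : Bv y / W x y - 1 = (Bv y - W x y) / W x y := by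
              field_simp
            rw [hdiv] at hlog
            have hmul : W x y * Real.log (Bv y / W x y) ≤ Bv y - W x y := by
              have := mul_le_mul_of_nonneg_left hlog hWpos.le
              rwa [mul_div_cancel₀ _ hWpos.ne'] at this
            have h2 : W x y * Real.log (W x y / Qd y) - W x y * Real.log (Bv y / Qd y)
                ≥ W x y - Bv y := by
              have : W x y * (Real.log (W x y / Qd y) - Real.log (Bv y / Qd y))
                  = -(W x y * Real.log (Bv y / W x y)) := by rw [hsplit]; ring
              nlinarith
            nlinarith
        have hsum := Finset.sum_le_sum hterm
        rw [Finset.sum_add_distrib] at hsum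
        have hzero : ∑ y, Pstar x * (W x y - Bv y) = 0 := by
          rw [← Finset.mul_sum, Finset.sum_sub_distrib, hWsum x, hBsum, sub_self, mul_zero]
        rw [hzero, add_zero] at hsum
        exact hsum
    have hswv : s * wv = ∑ x ∈ Finset.univ.erase x₀,
        ∑ y, Pstar x * W x y * Real.log (Bv y / Qd y) := by
      rw [hwv, Finset.mul_sum, Finset.sum_comm]
      refine Finset.sum_congr rfl fun y _ => ?_
      have hrw : ∀ x ∈ Finset.univ.erase x₀,
          Pstar x * W x y * Real.log (Bv y / Qd y)
            = (Pstar x * W x y) * Real.log (Bv y / Qd y) := fun x _ => rfl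
      rw [Finset.sum_congr rfl hrw, ← Finset.sum_mul, hsB y]
      ring
    have hle2 : s * wv ≤ s * v := by
      rw [hswv, hv, ← mul_assoc, mul_inv_cancel₀ hs0.ne', one_mul]
      exact Finset.sum_le_sum key
    exact le_of_mul_le_mul_left (by linarith) hs0
  have hwu : wv ≤ u := le_of_le_of_eq hwvle huv.symm
  -- pointwise application of the core lemma
  have h1s : 1 - s = p := by rw [hs]; ring
  have hThm : ∀ y, 0 < Qd y →
      Bv y * Real.log (Bv y / Qd y) - W x₀ y * Real.log (W x₀ y / Qd y) + (W x₀ y - Qd y)/s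
        = Qd y * hF s (W x₀ y / Qd y) := by
    intro y hq
    have hqne : Qd y ≠ 0 := hq.ne'
    have hsne : s ≠ 0 := hs0.ne'
    unfold hF phiF
    have hphi : (1 - (1-s) * (W x₀ y / Qd y))/s = Bv y / Qd y := by
      rw [h1s]
      simp only [hBv]
      field_simp
    rw [hphi]
    field_simp
  have hTnn : ∀ y ∈ Finset.univ,
      (0:ℝ) ≤ Bv y * Real.log (Bv y / Qd y) - W x₀ y * Real.log (W x₀ y / Qd y)
        + (W x₀ y - Qd y)/s := by
    intro y _
    rcases eq_or_ne (Qd y) 0 with hq | hq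
    · rw [hq, hQzeroA y hq, hQzeroB y hq]
      simp
    · have hqpos : 0 < Qd y := lt_of_le_of_ne (hQnn y) (Ne.symm hq)
      rw [hThm y hqpos]
      apply mul_nonneg hqpos.le
      apply hF_nonneg hs0 hse (div_nonneg (hW x₀ y) (hQnn y))
      rw [h1s, ← mul_div_assoc, div_le_one hqpos]
      exact hQA y
  have hTsum : ∑ y, (Bv y * Real.log (Bv y / Qd y) - W x₀ y * Real.log (W x₀ y / Qd y)
      + (W x₀ y - Qd y)/s) = wv - u := by
    rw [Finset.sum_add_distrib, Finset.sum_sub_distrib]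
    have hz2 : ∑ y, (W x₀ y - Qd y)/s = 0 := by
      rw [← Finset.sum_div, Finset.sum_sub_distrib, hAsum, hQsum, sub_self, zero_div]
    rw [hz2, add_zero, ← hwv, ← hu]
  have hTzero : ∀ y, Bv y * Real.log (Bv y / Qd y) - W x₀ y * Real.log (W x₀ y / Qd y)
      + (W x₀ y - Qd y)/s = 0 := by
    have hle0 : ∑ y, (Bv y * Real.log (Bv y / Qd y) - W x₀ y * Real.log (W x₀ y / Qd y)
        + (W x₀ y - Qd y)/s) ≤ 0 := by rw [hTsum]; linarith
    have heq0 := le_antisymm hle0 (Finset.sum_nonneg hTnn)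
    have := (Finset.sum_eq_zero_iff_of_nonneg hTnn).1 heq0
    exact fun y => this y (Finset.mem_univ y)
  have hAle : ∀ y ∈ Finset.univ, W x₀ y ≤ Qd y := by
    intro y _
    rcases eq_or_ne (Qd y) 0 with hq | hq
    · rw [hq, hQzeroA y hq]
    · have hqpos : 0 < Qd y := lt_of_le_of_ne (hQnn y) (Ne.symm hq)
      have hhf0 : hF s (W x₀ y / Qd y) = 0 := by
        have h := hTzero y
        rw [hThm y hqpos] at h
        exact (mul_eq_zero.1 h).resolve_left hq
      rcases eq_or_ne (W x₀ y) 0 with hw0 | hw0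
      · rw [hw0]; exact hqpos.le
      · have hWpos : 0 < W x₀ y := lt_of_le_of_ne (hW x₀ y) (Ne.symm hw0)
        have hane : W x₀ y / Qd y = 1 := by
          by_contra hane
          have := hF_pos hs0 hse (div_pos hWpos hqpos) hane
            (by rw [h1s, ← mul_div_assoc, div_le_one hqpos]; exact hQA y)
          rw [hhf0] at this
          exact lt_irrefl 0 this
        rw [div_eq_one_iff_eq hqpos.ne'] at hane
        rw [hane]
  have hAeqQ : ∀ y, W x₀ y = Qd y := by
    have hsums : ∑ y, W x₀ y = ∑ y, Qd y := by rw [hAsum, hQsum]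
    have := (Finset.sum_eq_sum_iff_of_le hAle).1 hsums
    exact fun y => this y (Finset.mem_univ y)
  have hu0 : u = 0 := by
    rw [hu]
    apply Finset.sum_eq_zero
    intro y _
    rw [hAeqQ y]
    rcases eq_or_ne (Qd y) 0 with h | h
    · rw [h, zero_mul]
    · rw [div_self h, Real.log_one, mul_zero]
  rw [hu0] at hupos
  exact lt_irrefl 0 hupos
end

section
/- Let $g(p_1, p_2) = p_1 \log\frac{p_1}{\frac{1}{e}p_1 + (1-\frac{1}{e})p_2} - p_2 \log\frac{p_2}{\frac{1}{e}p_1 + (1-\frac{1}{e})p_2} - (p_1 - p_2)$ for $p_1, p_2 \in (0,1]$. Then for fixed $p_2$, the second partial derivative of $g$ with respect to $p_1$ equals $\frac{p_2\left((e-1)^2 p_2 - p_1\right)}{p_1\left(p_1 + (e-1)p_2\right)^2}$; in particular, for fixed $p_2 = c > 0$, the map $p_1 \mapsto g(p_1, c)$ is convex on $\{p_1 : 0 < p_1 < (e-1)^2 c\}$ and concave on $\{p_1 : p_1 > (e-1)^2 c\}$. -/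
open BigOperators

noncomputable def g (p₁ p₂ : ℝ) : ℝ :=
  p₁ * Real.log (p₁ / ((Real.exp 1)⁻¹ * p₁ + (1 - (Real.exp 1)⁻¹) * p₂))
    - p₂ * Real.log (p₂ / ((Real.exp 1)⁻¹ * p₁ + (1 - (Real.exp 1)⁻¹) * p₂))
    - (p₁ - p₂)

noncomputable def g1 (p t : ℝ) : ℝ :=
  Real.log t - Real.log ((Real.exp 1)⁻¹ * t + (1 - (Real.exp 1)⁻¹) * p)
    - (Real.exp 1)⁻¹ * (t - p) / ((Real.exp 1)⁻¹ * t + (1 - (Real.exp 1)⁻¹) * p)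

noncomputable def g2 (p t : ℝ) : ℝ :=
  p * ((Real.exp 1 - 1) ^ 2 * p - t) / (t * (t + (Real.exp 1 - 1) * p) ^ 2)

lemma one_lt_E : (1:ℝ) < Real.exp 1 := by
  have := Real.add_one_lt_exp (x := 1) one_ne_zero; linarith

lemma Einv_pos : 0 < (Real.exp 1)⁻¹ := inv_pos.2 (Real.exp_pos 1)

lemma Einv_lt_one : (Real.exp 1)⁻¹ < 1 :=
  inv_lt_one_of_one_lt₀ one_lt_E

lemma D_pos {p t : ℝ} (hp : 0 < p) (ht : 0 < t) :
    0 < (Real.exp 1)⁻¹ * t + (1 - (Real.exp 1)⁻¹) * p :=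
  add_pos (mul_pos Einv_pos ht) (mul_pos (by linarith [Einv_lt_one]) hp)

lemma hasDerivAt_g {p t : ℝ} (hp : 0 < p) (ht : 0 < t) :
    HasDerivAt (fun s => g s p) (g1 p t) t := by
  have hE := Einv_pos
  have hD := D_pos hp ht
  have hDne := hD.ne'
  have hDd : HasDerivAt (fun s : ℝ => (Real.exp 1)⁻¹ * s + (1 - (Real.exp 1)⁻¹) * p)
      ((Real.exp 1)⁻¹) t := by
    simpa using ((hasDerivAt_id t).const_mul ((Real.exp 1)⁻¹)).add_const
      ((1 - (Real.exp 1)⁻¹) * p)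
  have hq1 : HasDerivAt (fun s : ℝ => s / ((Real.exp 1)⁻¹ * s + (1 - (Real.exp 1)⁻¹) * p))
      ((1 * ((Real.exp 1)⁻¹ * t + (1 - (Real.exp 1)⁻¹) * p) - t * (Real.exp 1)⁻¹) /
        ((Real.exp 1)⁻¹ * t + (1 - (Real.exp 1)⁻¹) * p) ^ 2) t :=
    (hasDerivAt_id t).div hDd hDne
  have hq2 : HasDerivAt (fun s : ℝ => p / ((Real.exp 1)⁻¹ * s + (1 - (Real.exp 1)⁻¹) * p))
      ((0 * ((Real.exp 1)⁻¹ * t + (1 - (Real.exp 1)⁻¹) * p) - p * (Real.exp 1)⁻¹) /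
        ((Real.exp 1)⁻¹ * t + (1 - (Real.exp 1)⁻¹) * p) ^ 2) t :=
    (hasDerivAt_const t p).div hDd hDne
  have hl1 := hq1.log (div_ne_zero ht.ne' hDne)
  have hl2 := hq2.log (div_ne_zero hp.ne' hDne)
  have h := (((hasDerivAt_id t).mul hl1).sub (hl2.const_mul p)).sub
    ((hasDerivAt_id t).sub_const p)
  convert h using 1
  · rfl
  · rfl
  · rfl
  rw [g1, Real.log_div ht.ne' hDne]
  simp only [id_eq]
  set E := (Real.exp 1)⁻¹ with hEdef
  clear_value E
  field_simp
  ring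

lemma hasDerivAt_g1 {p t : ℝ} (hp : 0 < p) (ht : 0 < t) :
    HasDerivAt (g1 p) (g2 p t) t := by
  have hE1 := one_lt_E
  have hE := Einv_pos
  have hD := D_pos hp ht
  have hDne := hD.ne'
  have hS : t + (Real.exp 1 - 1) * p ≠ 0 :=
    (add_pos ht (mul_pos (by linarith) hp)).ne'
  have hDd : HasDerivAt (fun s : ℝ => (Real.exp 1)⁻¹ * s + (1 - (Real.exp 1)⁻¹) * p)
      ((Real.exp 1)⁻¹) t := by
    simpa using ((hasDerivAt_id t).const_mul ((Real.exp 1)⁻¹)).add_const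
      ((1 - (Real.exp 1)⁻¹) * p)
  have hnum : HasDerivAt (fun s : ℝ => (Real.exp 1)⁻¹ * (s - p)) ((Real.exp 1)⁻¹) t := by
    simpa using ((hasDerivAt_id t).sub_const p).const_mul ((Real.exp 1)⁻¹)
  have hfrac := hnum.div hDd hDne
  have h := ((Real.hasDerivAt_log ht.ne').sub (hDd.log hDne)).sub hfrac
  convert h using 1
  · rfl
  · rfl
  · rfl
  rw [g2]
  have hEne : Real.exp 1 ≠ 0 := (Real.exp_pos 1).ne'
  have hinv : (Real.exp 1)⁻¹ = 1 / Real.exp 1 := by rw [one_div]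
  rw [hinv] at hDne ⊢
  set E := Real.exp 1 with hEdef
  clear_value E
  have hS' : t + p * (E - 1) ≠ 0 := by rwa [mul_comm]
  field_simp
  ring

lemma deriv_g_eq {p : ℝ} (hp : 0 < p) {t : ℝ} (ht : 0 < t) :
    deriv (fun s => g s p) =ᶠ[nhds t] g1 p := by
  filter_upwards [Ioi_mem_nhds ht] with x hx
  exact (hasDerivAt_g hp hx).deriv

lemma deriv2_g {p t : ℝ} (hp : 0 < p) (ht : 0 < t) :
    deriv (deriv (fun s => g s p)) t = g2 p t := by
  rw [Filter.EventuallyEq.deriv_eq (deriv_g_eq hp ht)]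
  exact (hasDerivAt_g1 hp ht).deriv

/-- For `p₁, p₂ ∈ (0,1]`, the second partial derivative of `g` in `p₁` equals
`p₂((e-1)² p₂ - p₁) / (p₁ (p₁ + (e-1) p₂)²)`; in particular, for fixed
`p₂ = c > 0`, `p₁ ↦ g(p₁, c)` is convex on `{p₁ : 0 < p₁ < (e-1)² c}` and
concave on `{p₁ : (e-1)² c < p₁}`. -/
theorem second_deriv_g_and_convexity :
    (∀ p₂ ∈ Set.Ioc (0 : ℝ) 1, ∀ p₁ ∈ Set.Ioc (0 : ℝ) 1,
      deriv (deriv (fun t => g t p₂)) p₁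
        = p₂ * ((Real.exp 1 - 1) ^ 2 * p₂ - p₁)
            / (p₁ * (p₁ + (Real.exp 1 - 1) * p₂) ^ 2)) ∧
    (∀ c ∈ Set.Ioc (0 : ℝ) 1,
      ConvexOn ℝ {p₁ : ℝ | 0 < p₁ ∧ p₁ < (Real.exp 1 - 1) ^ 2 * c}
        (fun t => g t c) ∧
      ConcaveOn ℝ {p₁ : ℝ | (Real.exp 1 - 1) ^ 2 * c < p₁}
        (fun t => g t c)) := by
  have hE1 := one_lt_E
  constructor
  · intro p₂ hp₂ p₁ hp₁
    exact deriv2_g hp₂.1 hp₁.1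
  · intro c hc
    have hc0 := hc.1
    have hK : 0 < (Real.exp 1 - 1) ^ 2 * c :=
      mul_pos (pow_pos (by linarith) 2) hc0
    have hdiff : ∀ x : ℝ, 0 < x → DifferentiableAt ℝ (fun t => g t c) x :=
      fun x hx => (hasDerivAt_g hc0 hx).differentiableAt
    have hdiff2 : ∀ x : ℝ, 0 < x → DifferentiableAt ℝ (deriv (fun t => g t c)) x :=
      fun x hx =>
        (Filter.EventuallyEq.differentiableAt_iff (deriv_g_eq hc0 hx)).2
          (hasDerivAt_g1 hc0 hx).differentiableAt
    constructor
    · have hset : {p₁ : ℝ | 0 < p₁ ∧ p₁ < (Real.exp 1 - 1) ^ 2 * c}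
          = Set.Ioo 0 ((Real.exp 1 - 1) ^ 2 * c) := rfl
      rw [hset]
      apply convexOn_of_deriv2_nonneg' (convex_Ioo _ _)
      · exact fun x hx => (hdiff x hx.1).differentiableWithinAt
      · exact fun x hx => (hdiff2 x hx.1).differentiableWithinAt
      · intro x hx
        have hx0 := hx.1
        simp only [Function.iterate_succ, Function.iterate_zero, Function.comp_apply, id_eq]
        rw [deriv2_g hc0 hx0, g2]
        have hS : 0 < x + (Real.exp 1 - 1) * c := add_pos hx0 (mul_pos (by linarith) hc0)
        apply div_nonneg
        · nlinarith [hx.2]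
        · positivity
    · have hset : {p₁ : ℝ | (Real.exp 1 - 1) ^ 2 * c < p₁}
          = Set.Ioi ((Real.exp 1 - 1) ^ 2 * c) := rfl
      rw [hset]
      apply concaveOn_of_deriv2_nonpos' (convex_Ioi _)
      · exact fun x hx => (hdiff x (hK.trans hx)).differentiableWithinAt
      · exact fun x hx => (hdiff2 x (hK.trans hx)).differentiableWithinAt
      · intro x hx
        have hx0 : 0 < x := hK.trans hx
        simp only [Function.iterate_succ, Function.iterate_zero, Function.comp_apply, id_eq]
        rw [deriv2_g hc0 hx0, g2]
        have hS : 0 < x + (Real.exp 1 - 1) * c := add_pos hx0 (mul_pos (by linarith) hc0)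
        apply div_nonpos_of_nonpos_of_nonneg
        · nlinarith [Set.mem_Ioi.1 hx]
        · positivity
end
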